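/- arXiv:2312.07197 — 7 statements merged into one kernel-verified Lean document; each statement's English description precedes it below -/
import Mathlib

section
/- Let R be an associative ring, S a set of finitely presentable right R-modules, κ a regular cardinal, and C a κ-presentable R-module that is a directed colimit of modules from S. Then C is a direct summand of a directed colimit of modules from S indexed by a directed poset of cardinality less than κ. -/
open CategoryTheory Limits
open Set Cardinal

universe u

/-- A module is finitely presentable if it is the cokernel of a morphism of finitely
generated free modules. -/
def IsFinitelyPresentableMod (A : Type u) [Ring A] (M : Type u) [AddCommGroup M]
    [Module A M] : Prop :=
  ∃ (k l : ℕ) (f : (Fin k →₀ A) →ₗ[A] (Fin l →₀ A)),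
    Nonempty (M ≃ₗ[A] ((Fin l →₀ A) ⧸ LinearMap.range f))

/-- A module is `κ`-presentable if it is the cokernel of a morphism of free modules each
with fewer than `κ` generators. -/
def IsKappaPresentableMod (κ : Cardinal.{u}) (A : Type u) [Ring A] (M : Type u)
    [AddCommGroup M] [Module A M] : Prop :=
  ∃ (ι σ : Type u) (_ : Cardinal.mk ι < κ) (_ : Cardinal.mk σ < κ)
    (f : (ι →₀ A) →ₗ[A] (σ →₀ A)),
    Nonempty (M ≃ₗ[A] ((σ →₀ A) ⧸ LinearMap.range f))

/-- A colimit of a directed diagram with objects in `S`, indexed by a directed poset. -/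
structure DirectedColimitOver (R : Type u) [Ring R] (S : Set (ModuleCat.{u} Rᵐᵒᵖ)) where
  /-- the index poset -/
  Ξ : Type u
  [po : PartialOrder Ξ]
  [dir : IsDirected Ξ (· ≤ ·)]
  [ne : Nonempty Ξ]
  /-- the directed diagram -/
  G : Ξ ⥤ ModuleCat.{u} Rᵐᵒᵖ
  memS : ∀ ξ : Ξ, G.obj ξ ∈ S
  /-- a colimit cocone over the diagram -/
  c : Cocone G
  isColim : IsColimit c

attribute [instance] DirectedColimitOver.po DirectedColimitOver.dir DirectedColimitOver.ne

/-- An auxiliary lemma: every subset of size `< κ` of a directed poset is dominated by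
a directed subset of size `< κ`. -/
lemma exists_directed_closure {κ : Cardinal.{u}} (hκ : κ.IsRegular) {Ξ : Type u}
    [PartialOrder Ξ] [IsDirected Ξ (· ≤ ·)] [Nonempty Ξ] (T : Set Ξ) (hT : #T < κ) :
    ∃ Z : Set Ξ, Z.Nonempty ∧ (∀ a ∈ Z, ∀ b ∈ Z, ∃ c ∈ Z, a ≤ c ∧ b ≤ c) ∧ #Z < κ ∧
      ∀ t ∈ T, ∃ z ∈ Z, t ≤ z := by
  classical
  rcases hκ.aleph0_le.lt_or_eq with hlt | heq
  · -- κ uncountable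
    obtain ⟨ub, hub1, hub2⟩ :
        ∃ ub : Ξ → Ξ → Ξ, (∀ a b, a ≤ ub a b) ∧ (∀ a b, b ≤ ub a b) := by
      choose ub h1 h2 using fun a b : Ξ => directed_of (· ≤ ·) a b
      exact ⟨ub, h1, h2⟩
    set T' : Set Ξ := T ∪ {Classical.arbitrary Ξ} with hT'
    have hT'card : #T' < κ := by
      refine lt_of_le_of_lt (Cardinal.mk_union_le _ _) ?_
      exact Cardinal.add_lt_of_lt hκ.aleph0_le hT (by simpa using Cardinal.one_lt_aleph0.trans hlt)
    let Tn : ℕ → Set Ξ := fun n => Nat.rec T' (fun _ s => s ∪ Set.image2 ub s s) n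
    have hTsucc : ∀ n, Tn n ⊆ Tn (n + 1) := fun n => subset_union_left
    have hTmono : Monotone Tn := monotone_nat_of_le_succ hTsucc
    have hTcard : ∀ n, #(↥(Tn n)) < κ := by
      intro n
      induction n with
      | zero => exact hT'card
      | succ n ih =>
        refine lt_of_le_of_lt (Cardinal.mk_union_le _ _) ?_
        refine Cardinal.add_lt_of_lt hκ.aleph0_le ih ?_
        exact lt_of_le_of_lt Cardinal.mk_image2_le
          (Cardinal.mul_lt_of_lt hκ.aleph0_le ih ih)
    refine ⟨⋃ n, Tn n, ?_, ?_, ?_, ?_⟩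
    · exact ⟨Classical.arbitrary Ξ, mem_iUnion.2 ⟨0, subset_union_right rfl⟩⟩
    · intro a ha b hb
      obtain ⟨m, hm⟩ := mem_iUnion.1 ha
      obtain ⟨n, hn⟩ := mem_iUnion.1 hb
      refine ⟨ub a b, mem_iUnion.2 ⟨max m n + 1, ?_⟩, hub1 a b, hub2 a b⟩
      exact subset_union_right
        (Set.mem_image2_of_mem (hTmono (le_max_left m n) hm) (hTmono (le_max_right m n) hn))
    · have hrw : (⋃ n, Tn n) = ⋃ m : ULift.{u} ℕ, Tn m.down := by
        ext x
        simp only [mem_iUnion]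
        exact ⟨fun ⟨n, h⟩ => ⟨⟨n⟩, h⟩, fun ⟨m, h⟩ => ⟨m.down, h⟩⟩
      rw [hrw]
      refine lt_of_le_of_lt Cardinal.mk_iUnion_le_sum_mk ?_
      refine Cardinal.sum_lt_of_isRegular hκ ?_ fun m => hTcard m.down
      simpa using hlt
    · exact fun t ht => ⟨t, mem_iUnion.2 ⟨0, subset_union_left ht⟩, le_rfl⟩
  · -- κ = ℵ₀
    have hfin : T.Finite := by
      rw [← Cardinal.lt_aleph0_iff_set_finite]; rwa [heq]
    obtain ⟨u0, hu0⟩ := Finset.exists_le hfin.toFinset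
    refine ⟨({u0} : Set Ξ), ⟨u0, rfl⟩, ?_, ?_, ?_⟩
    · exact fun a ha b hb => ⟨u0, rfl, le_of_eq ha, le_of_eq hb⟩
    · rw [← heq]; simpa using Cardinal.one_lt_aleph0
    · exact fun t ht => ⟨u0, rfl, hu0 t (hfin.mem_toFinset.2 ht)⟩

/-- **κ-presentable directed colimits are summands of small directed colimits.**
Let `R` be an associative ring, `S` a set of finitely presentable right `R`-modules,
`κ` a regular cardinal, and `C` a `κ`-presentable right `R`-module which is a directed
colimit of modules from `S`.  Then `C` is a direct summand of a directed colimit of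
modules from `S` indexed by a directed poset of cardinality less than `κ`. -/
theorem direct_summand_of_small_directed_colimit
    (R : Type u) [Ring R] (S : Set (ModuleCat.{u} Rᵐᵒᵖ))
    (hS : ∀ T ∈ S, IsFinitelyPresentableMod Rᵐᵒᵖ T)
    (κ : Cardinal.{u}) (hκ : κ.IsRegular)
    (C : ModuleCat.{u} Rᵐᵒᵖ) (hC : IsKappaPresentableMod κ Rᵐᵒᵖ C)
    (P : DirectedColimitOver R S) (hPC : Nonempty (P.c.pt ≅ C)) :
    ∃ (Q : DirectedColimitOver R S) (_ : Cardinal.mk Q.Ξ < κ)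
      (i : C ⟶ Q.c.pt) (r : Q.c.pt ⟶ C), i ≫ r = 𝟙 C := by
  classical
  obtain ⟨iso⟩ := hPC
  obtain ⟨ι, σ, hι, hσ, f, ⟨e⟩⟩ := hC
  -- a colimit cocone over P.G with point C
  let E : Cocone P.G :=
    { pt := C
      ι := { app := fun ξ => P.c.ι.app ξ ≫ iso.hom
             naturality := by intro a b g; simp [P.c.w] } }
  have hE : IsColimit E := P.isColim.ofIsoColimit (Cocones.ext iso (fun j => rfl))
  let π : (σ →₀ Rᵐᵒᵖ) →ₗ[Rᵐᵒᵖ] C := e.symm.toLinearMap ∘ₗ (LinearMap.range f).mkQ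
  -- elementwise helper lemmas
  have push_push : ∀ {a b c' : P.Ξ} (h1 : a ≤ b) (h2 : b ≤ c') (x : P.G.obj a),
      P.G.map (homOfLE h2) (P.G.map (homOfLE h1) x) = P.G.map (homOfLE (h1.trans h2)) x := by
    intro a b c' h1 h2 x
    have h3 : P.G.map (homOfLE h1) ≫ P.G.map (homOfLE h2) = P.G.map (homOfLE (h1.trans h2)) := by
      rw [← P.G.map_comp]
      rfl
    exact congrArg (fun (g : P.G.obj a ⟶ P.G.obj c') => g x) h3
  have Ew_apply : ∀ {a b : P.Ξ} (h : a ≤ b) (x : P.G.obj a),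
      E.ι.app b (P.G.map (homOfLE h) x) = E.ι.app a x := by
    intro a b h x
    exact congrArg (fun (g : P.G.obj a ⟶ C) => g x) (E.w (homOfLE h))
  -- generators
  choose ξs cs hcs using
    fun s : σ => Concrete.isColimit_exists_rep P.G hE (π (Finsupp.single s 1))
  have hcs' : ∀ s : σ, E.ι.app (ξs s) (cs s) = π (Finsupp.single s 1) := fun s => hcs s
  -- relations
  let w : ι → (σ →₀ Rᵐᵒᵖ) := fun r => f (Finsupp.single r 1)
  have hπw : ∀ r, π (w r) = 0 := by
    intro r
    have hm : w r ∈ LinearMap.range f := ⟨Finsupp.single r 1, rfl⟩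
    have : (LinearMap.range f).mkQ (w r) = 0 := (Submodule.Quotient.mk_eq_zero _).2 hm
    simp only [π, LinearMap.comp_apply, this, map_zero]
  have hμ' : ∀ r : ι, ∃ m : P.Ξ, ∀ s ∈ (w r).support, ξs s ≤ m := by
    intro r
    obtain ⟨m, hm⟩ := Finset.exists_le ((w r).support.image ξs)
    exact ⟨m, fun s hs => hm _ (Finset.mem_image_of_mem _ hs)⟩
  choose μ hμ using hμ'
  let z : ∀ r : ι, P.G.obj (μ r) := fun r =>
    ∑ s ∈ (w r).support.attach, (w r) s.1 • (P.G.map (homOfLE (hμ r s.1 s.2)) (cs s.1))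
  have hz : ∀ r, E.ι.app (μ r) (z r) = E.ι.app (μ r) 0 := by
    intro r
    rw [map_zero, ← hπw r]
    have h1 : E.ι.app (μ r) (z r)
        = ∑ s ∈ (w r).support.attach, π (Finsupp.single s.1 ((w r) s.1)) := by
      rw [map_sum]
      refine Finset.sum_congr rfl fun s _ => ?_
      rw [map_smul, Ew_apply, hcs']
      have h8 : Finsupp.single (s.1 : σ) ((w r) s.1) = ((w r) s.1) • Finsupp.single s.1 (1:Rᵐᵒᵖ) := by
        rw [Finsupp.smul_single, smul_eq_mul, mul_one]
      rw [h8, map_smul]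
    rw [h1, ← map_sum]
    congr 1
    rw [Finset.sum_attach ((w r).support) (fun s => Finsupp.single s ((w r) s))]
    exact Finsupp.sum_single (w r)
  choose ν g1 g2 hg using
    fun r => Concrete.isColimit_exists_of_rep_eq P.G hE _ _ (hz r)
  have hμν : ∀ r, μ r ≤ ν r := fun r => leOfHom (g1 r)
  have hzν : ∀ r, P.G.map (homOfLE (hμν r)) (z r) = 0 := by
    intro r
    rw [Subsingleton.elim (homOfLE (hμν r)) (g1 r)]
    exact (hg r).trans (map_zero _)
  -- the small directed subposet
  have hTcard : #(↥(Set.range ξs ∪ Set.range ν)) < κ := by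
    refine lt_of_le_of_lt (Cardinal.mk_union_le _ _) ?_
    exact Cardinal.add_lt_of_lt hκ.aleph0_le
      (lt_of_le_of_lt Cardinal.mk_range_le hσ) (lt_of_le_of_lt Cardinal.mk_range_le hι)
  obtain ⟨Z, hZne, hZdir, hZcard, hZub⟩ := exists_directed_closure hκ _ hTcard
  haveI : Nonempty ↥Z := hZne.to_subtype
  haveI : IsDirected ↥Z (· ≤ ·) := by
    constructor
    rintro ⟨a, ha⟩ ⟨b, hb⟩
    obtain ⟨c0, hc0, h1, h2⟩ := hZdir a ha b hb
    exact ⟨⟨c0, hc0⟩, h1, h2⟩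
  have hηe : ∀ s : σ, ∃ t : ↥Z, ξs s ≤ (t : P.Ξ) := by
    intro s
    obtain ⟨t, ht, h⟩ := hZub _ (Set.mem_union_left _ (Set.mem_range_self s))
    exact ⟨⟨t, ht⟩, h⟩
  choose η hη using hηe
  have hν'e : ∀ r : ι, ∃ t : ↥Z, ν r ≤ (t : P.Ξ) := by
    intro r
    obtain ⟨t, ht, h⟩ := hZub _ (Set.mem_union_right _ (Set.mem_range_self r))
    exact ⟨⟨t, ht⟩, h⟩
  choose ν' hν' using hν'e
  -- the small diagram and its colimit
  let G₀ : ↥Z ⥤ ModuleCat.{u} Rᵐᵒᵖ := (show Monotone ((↑) : ↥Z → P.Ξ) from fun _ _ h => h).functor ⋙ P.G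
  let Q : DirectedColimitOver R S :=
    { Ξ := ↥Z
      G := G₀
      memS := fun x => P.memS x.1
      c := colimit.cocone G₀
      isColim := colimit.isColimit G₀ }
  -- the retraction
  let E₀ : Cocone G₀ := E.whisker (show Monotone ((↑) : ↥Z → P.Ξ) from fun _ _ h => h).functor
  let rr : colimit G₀ ⟶ C := colimit.desc G₀ E₀
  have colw : ∀ {a b : ↥Z} (h : a ≤ b) (x : G₀.obj a),
      colimit.ι G₀ b (G₀.map (homOfLE h) x) = colimit.ι G₀ a x := by
    intro a b h x
    exact congrArg (fun (g : G₀.obj a ⟶ colimit G₀) => g x) (colimit.w G₀ (homOfLE h))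
  -- the section
  let v : σ → ↑(colimit G₀) := fun s =>
    colimit.ι G₀ (η s) (P.G.map (homOfLE (hη s)) (cs s))
  let φ : (σ →₀ Rᵐᵒᵖ) →ₗ[Rᵐᵒᵖ] ↑(colimit G₀) := Finsupp.linearCombination Rᵐᵒᵖ v
  -- key vanishing
  have hφw : ∀ r : ι, φ (w r) = 0 := by
    intro r
    obtain ⟨θ, hθ⟩ := Finset.exists_le (insert (ν' r) ((w r).support.image η))
    have hθν : ν' r ≤ θ := hθ _ (Finset.mem_insert_self _ _)
    have hθη : ∀ s ∈ (w r).support, η s ≤ θ := fun s hs =>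
      hθ _ (Finset.mem_insert_of_mem (Finset.mem_image_of_mem _ hs))
    have hνθ : ν r ≤ (θ : P.Ξ) := le_trans (hν' r) hθν
    have hμθ : μ r ≤ (θ : P.Ξ) := (hμν r).trans hνθ
    have key : ∀ s : {x // x ∈ (w r).support},
        (w r) s.1 • v s.1 =
        colimit.ι G₀ θ ((w r) s.1 •
          P.G.map (homOfLE ((hη s.1).trans (hθη s.1 s.2 : (η s.1 : P.Ξ) ≤ (θ : P.Ξ)))) (cs s.1)) := by
      rintro ⟨s, hs⟩
      refine Eq.trans ?_ (LinearMap.map_smul (colimit.ι G₀ θ).hom _ _).symm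
      congr 1
      have e1 := colw (hθη s hs) (P.G.map (homOfLE (hη s)) (cs s))
      show colimit.ι G₀ (η s) (P.G.map (homOfLE (hη s)) (cs s)) = _
      rw [← e1]
      congr 1
      show P.G.map _ (P.G.map _ _) = _
      rw [Subsingleton.elim ((show Monotone ((↑) : ↥Z → P.Ξ) from fun _ _ h => h).functor.map (homOfLE (hθη s hs)))
        (homOfLE ((hθη s hs : (η s : P.Ξ) ≤ (θ : P.Ξ))))]
      exact push_push _ _ _
    have hφ1 : φ (w r) = ∑ s ∈ (w r).support.attach, (w r) s.1 • v s.1 := by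
      rw [Finsupp.linearCombination_apply, Finsupp.sum,
        ← Finset.sum_attach ((w r).support) (fun s => (w r) s • v s)]
    rw [hφ1, Finset.sum_congr rfl (fun s _ => key s)]; refine (map_sum (colimit.ι G₀ θ).hom _ _).symm.trans ?_
    have hpz : (∑ s ∈ (w r).support.attach, (w r) s.1 •
          P.G.map (homOfLE ((hη s.1).trans (hθη s.1 s.2 : (η s.1 : P.Ξ) ≤ (θ : P.Ξ)))) (cs s.1))
        = P.G.map (homOfLE hμθ) (z r) := by
      show _ = P.G.map (homOfLE hμθ) (∑ s ∈ (w r).support.attach, _)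
      rw [map_sum]
      refine Finset.sum_congr rfl fun s _ => ?_
      rw [map_smul, push_push]
    exact (congrArg (colimit.ι G₀ θ).hom (hpz.trans ((push_push (hμν r) hνθ (z r)).symm.trans ((congrArg (P.G.map (homOfLE hνθ)).hom (hzν r)).trans (map_zero _))))).trans (map_zero _)
  have hφ : LinearMap.range f ≤ LinearMap.ker φ := by
    rintro x ⟨y, rfl⟩
    have hcomp : φ ∘ₗ f = 0 := by
      apply Finsupp.lhom_ext
      intro r a
      have h1 : Finsupp.single r a = a • Finsupp.single r (1 : Rᵐᵒᵖ) := by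
        rw [Finsupp.smul_single, smul_eq_mul, mul_one]
      rw [LinearMap.comp_apply, h1, map_smul, map_smul]
      show a • φ (w r) = _
      rw [hφw r, smul_zero, LinearMap.zero_apply]
    have h2 := LinearMap.congr_fun hcomp y
    simpa using h2
  let i' : ↑C →ₗ[Rᵐᵒᵖ] ↑(colimit G₀) := ((LinearMap.range f).liftQ φ hφ) ∘ₗ e.toLinearMap
  refine ⟨Q, hZcard, ModuleCat.ofHom i', rr, ?_⟩
  -- the composite is the identity
  have key2 : ∀ s : σ, rr (v s) = π (Finsupp.single s 1) := by
    intro s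
    show rr (colimit.ι G₀ (η s) (P.G.map (homOfLE (hη s)) (cs s))) = _
    have h6 : colimit.ι G₀ (η s) ≫ rr = E₀.ι.app (η s) := colimit.ι_desc E₀ (η s)
    have h7 := congrArg (fun (g : G₀.obj (η s) ⟶ C) => g (P.G.map (homOfLE (hη s)) (cs s))) h6
    refine h7.trans ?_
    show E.ι.app ((η s) : P.Ξ) (P.G.map (homOfLE (hη s)) (cs s)) = _
    rw [Ew_apply, hcs']
  have hrφ : (LinearMap.comp (rr.hom : ↑(colimit G₀) →ₗ[Rᵐᵒᵖ] ↑C) φ) = π := by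
    apply Finsupp.lhom_ext
    intro s a
    have h1 : Finsupp.single s a = a • Finsupp.single s (1 : Rᵐᵒᵖ) := by
      rw [Finsupp.smul_single, smul_eq_mul, mul_one]
    rw [h1, map_smul, map_smul]
    congr 1
    rw [LinearMap.comp_apply]
    have h3 : φ (Finsupp.single s (1:Rᵐᵒᵖ)) = v s := by
      simp only [φ, Finsupp.linearCombination_single, one_smul]
    rw [h3]
    exact key2 s
  ext x
  show rr (i' x) = x
  obtain ⟨q, hq⟩ := (LinearMap.range f).mkQ_surjective (e x)
  show rr (((LinearMap.range f).liftQ φ hφ) (e x)) = x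
  rw [← hq, Submodule.mkQ_apply, Submodule.liftQ_apply]
  have h4 := LinearMap.congr_fun hrφ q
  rw [LinearMap.comp_apply] at h4
  have h5 : π q = x := by
    show e.symm ((LinearMap.range f).mkQ q) = x
    rw [hq, e.symm_apply_apply]
  exact h4.trans h5
end

section
/- Let R be a ring, M a pure submodule of a left R-module L, and F^• a complex of right R-modules such that the complex of abelian groups F^• ⊗_R L is acyclic. Then the complex F^• ⊗_R M is acyclic. -/
open CategoryTheory TensorProduct

universe u

set_option maxHeartbeats 1000000
noncomputable section

namespace NCT

variable (R : Type u) [Ring R]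

/-- The subgroup of relations defining the balanced tensor product `M ⊗_R N`
of a right `R`-module `M` and a left `R`-module `N`. -/
def rel (M N : Type u) [AddCommGroup M] [Module Rᵐᵒᵖ M] [AddCommGroup N] [Module R N] :
    AddSubgroup (M ⊗[ℤ] N) :=
  AddSubgroup.closure {x | ∃ (r : R) (m : M) (n : N),
    x = (MulOpposite.op r • m) ⊗ₜ[ℤ] n - m ⊗ₜ[ℤ] (r • n)}

/-- The balanced tensor product `M ⊗_R N` over a (possibly noncommutative) ring `R`. -/
def Tens (M N : Type u) [AddCommGroup M] [Module Rᵐᵒᵖ M] [AddCommGroup N] [Module R N] :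
    Type u :=
  (M ⊗[ℤ] N) ⧸ rel R M N

instance (M N : Type u) [AddCommGroup M] [Module Rᵐᵒᵖ M] [AddCommGroup N] [Module R N] :
    AddCommGroup (Tens R M N) :=
  inferInstanceAs (AddCommGroup ((M ⊗[ℤ] N) ⧸ rel R M N))

variable {R}

variable {M M' M'' N N' N'' : Type u}
  [AddCommGroup M] [Module Rᵐᵒᵖ M] [AddCommGroup M'] [Module Rᵐᵒᵖ M']
  [AddCommGroup M''] [Module Rᵐᵒᵖ M'']
  [AddCommGroup N] [Module R N] [AddCommGroup N'] [Module R N']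
  [AddCommGroup N''] [Module R N'']

/-- The canonical projection. -/
def mk : M ⊗[ℤ] N →+ Tens R M N := QuotientAddGroup.mk' (rel R M N)

lemma mk_surjective : Function.Surjective (mk (R := R) (M := M) (N := N)) :=
  QuotientAddGroup.mk'_surjective _

private def intMap (f : M →ₗ[Rᵐᵒᵖ] M') (g : N →ₗ[R] N') : M ⊗[ℤ] N →ₗ[ℤ] M' ⊗[ℤ] N' :=
  TensorProduct.map f.toAddMonoidHom.toIntLinearMap g.toAddMonoidHom.toIntLinearMap

private lemma intMap_id :
    intMap (LinearMap.id : M →ₗ[Rᵐᵒᵖ] M) (LinearMap.id : N →ₗ[R] N) = LinearMap.id :=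
  TensorProduct.ext' fun _ _ => rfl

private lemma intMap_comp (f' : M' →ₗ[Rᵐᵒᵖ] M'') (f : M →ₗ[Rᵐᵒᵖ] M')
    (g' : N' →ₗ[R] N'') (g : N →ₗ[R] N') :
    intMap (f'.comp f) (g'.comp g) = (intMap f' g').comp (intMap f g) :=
  TensorProduct.ext' fun _ _ => rfl

private lemma rel_le (f : M →ₗ[Rᵐᵒᵖ] M') (g : N →ₗ[R] N') :
    rel R M N ≤ (rel R M' N').comap (intMap f g).toAddMonoidHom := by
  rw [rel, AddSubgroup.closure_le]
  rintro x ⟨r, m, n, rfl⟩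
  simp only [SetLike.mem_coe, AddSubgroup.mem_comap, LinearMap.toAddMonoidHom_coe, map_sub]
  apply AddSubgroup.subset_closure
  refine ⟨r, f m, g n, ?_⟩
  show f (MulOpposite.op r • m) ⊗ₜ[ℤ] g n - f m ⊗ₜ[ℤ] g (r • n) = _
  simp [intMap, f.map_smul, g.map_smul]

/-- Functoriality of the balanced tensor product. -/
def tmap (f : M →ₗ[Rᵐᵒᵖ] M') (g : N →ₗ[R] N') : Tens R M N →+ Tens R M' N' :=
  QuotientAddGroup.map _ _ (intMap f g).toAddMonoidHom (rel_le f g)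

lemma tmap_mk (f : M →ₗ[Rᵐᵒᵖ] M') (g : N →ₗ[R] N') (x : M ⊗[ℤ] N) :
    tmap f g (mk x) = mk (intMap f g x) := rfl

lemma tmap_id_apply (x : Tens R M N) :
    tmap (LinearMap.id : M →ₗ[Rᵐᵒᵖ] M) (LinearMap.id : N →ₗ[R] N) x = x := by
  obtain ⟨y, rfl⟩ := mk_surjective x
  rw [tmap_mk, intMap_id]
  rfl

lemma tmap_tmap (f' : M' →ₗ[Rᵐᵒᵖ] M'') (f : M →ₗ[Rᵐᵒᵖ] M')
    (g' : N' →ₗ[R] N'') (g : N →ₗ[R] N') (x : Tens R M N) :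
    tmap f' g' (tmap f g x) = tmap (f'.comp f) (g'.comp g) x := by
  obtain ⟨y, rfl⟩ := mk_surjective x
  rw [tmap_mk, tmap_mk, tmap_mk, intMap_comp]
  rfl

lemma tmap_add_left (f₁ f₂ : M →ₗ[Rᵐᵒᵖ] M') (g : N →ₗ[R] N') :
    tmap (f₁ + f₂) g = tmap f₁ g + tmap f₂ g := by
  ext x
  obtain ⟨y, rfl⟩ := mk_surjective x
  have h : intMap (f₁ + f₂) g = intMap f₁ g + intMap f₂ g := by
    apply TensorProduct.ext'
    intro m n
    show (f₁ + f₂) m ⊗ₜ[ℤ] g n = f₁ m ⊗ₜ[ℤ] g n + f₂ m ⊗ₜ[ℤ] g n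
    simp [intMap, add_tmul]
  simp only [AddMonoidHom.add_apply, tmap_mk, h, LinearMap.add_apply]
  rw [map_add]

lemma tmap_add_right (f : M →ₗ[Rᵐᵒᵖ] M') (g₁ g₂ : N →ₗ[R] N') :
    tmap f (g₁ + g₂) = tmap f g₁ + tmap f g₂ := by
  ext x
  obtain ⟨y, rfl⟩ := mk_surjective x
  have h : intMap f (g₁ + g₂) = intMap f g₁ + intMap f g₂ := by
    apply TensorProduct.ext'
    intro m n
    show f m ⊗ₜ[ℤ] (g₁ + g₂) n = f m ⊗ₜ[ℤ] g₁ n + f m ⊗ₜ[ℤ] g₂ n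
    simp [intMap, tmul_add]
  simp only [AddMonoidHom.add_apply, tmap_mk, h, LinearMap.add_apply]
  rw [map_add]


lemma tmap_zero_left (g : N →ₗ[R] N') :
    tmap (0 : M →ₗ[Rᵐᵒᵖ] M') g = 0 := by
  ext x
  obtain ⟨y, rfl⟩ := mk_surjective x
  have h : intMap (0 : M →ₗ[Rᵐᵒᵖ] M') g = 0 := by
    apply TensorProduct.ext'
    intro m n
    show (0 : M →ₗ[Rᵐᵒᵖ] M') m ⊗ₜ[ℤ] g n = 0
    simp [intMap]
  rw [tmap_mk, h]
  rfl

lemma tmap_zero_right (f : M →ₗ[Rᵐᵒᵖ] M') :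
    tmap f (0 : N →ₗ[R] N') = 0 := by
  ext x
  obtain ⟨y, rfl⟩ := mk_surjective x
  have h : intMap f (0 : N →ₗ[R] N') = 0 := by
    apply TensorProduct.ext'
    intro m n
    show f m ⊗ₜ[ℤ] (0 : N →ₗ[R] N') n = 0
    simp [intMap]
  rw [tmap_mk, h]
  rfl

variable (R)

/-- The balanced tensor product, as a bifunctor on module categories. -/
def tensorBifunctor : ModuleCat.{u} Rᵐᵒᵖ ⥤ ModuleCat.{u} R ⥤ AddCommGrpCat.{u} where
  obj M :=
    { obj := fun N => AddCommGrpCat.of (Tens R M N)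
      map := fun g => AddCommGrpCat.ofHom (tmap LinearMap.id g.hom)
      map_id := fun N => by
        ext x
        exact tmap_id_apply x
      map_comp := fun g g' => by
        ext x
        show tmap LinearMap.id (LinearMap.comp g'.hom g.hom) x
          = tmap LinearMap.id g'.hom (tmap LinearMap.id g.hom x)
        rw [tmap_tmap, LinearMap.id_comp] }
  map f :=
    { app := fun N => AddCommGrpCat.ofHom (tmap f.hom LinearMap.id)
      naturality := fun N N' g => by
        ext x
        show tmap f.hom LinearMap.id (tmap LinearMap.id g.hom x)
          = tmap LinearMap.id g.hom (tmap f.hom LinearMap.id x)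
        rw [tmap_tmap, tmap_tmap, LinearMap.id_comp, LinearMap.comp_id,
          LinearMap.id_comp, LinearMap.comp_id] }
  map_id := fun M => by
    ext N x
    exact tmap_id_apply x
  map_comp := fun f f' => by
    ext N x
    show tmap (LinearMap.comp f'.hom f.hom) LinearMap.id x
      = tmap f'.hom LinearMap.id (tmap f.hom LinearMap.id x)
    rw [tmap_tmap, LinearMap.id_comp]

instance (M : ModuleCat.{u} Rᵐᵒᵖ) : ((tensorBifunctor R).obj M).Additive where
  map_add := by
    intro N N' g g'
    ext x
    show tmap LinearMap.id (g + g').hom x = _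
    rw [ModuleCat.hom_add, tmap_add_right]
    rfl

instance (N : ModuleCat.{u} R) : ((tensorBifunctor R).flip.obj N).Additive where
  map_add := by
    intro M M' f f'
    ext x
    show tmap (f + f').hom LinearMap.id x = _
    rw [ModuleCat.hom_add, tmap_add_left]
    rfl


instance : (tensorBifunctor R).PreservesZeroMorphisms where
  map_zero := by
    intro M M'
    ext N x
    show tmap (0 : M ⟶ M').hom LinearMap.id x = 0
    rw [ModuleCat.hom_zero, tmap_zero_left]
    rfl

/-- A right `R`-module `M` is flat if `M ⊗_R -` preserves injectivity. -/
def FlatRight (M : Type u) [AddCommGroup M] [Module Rᵐᵒᵖ M] : Prop :=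
  ∀ (N N' : Type u) [AddCommGroup N] [Module R N] [AddCommGroup N'] [Module R N']
    (g : N →ₗ[R] N'), Function.Injective g →
      Function.Injective (tmap (LinearMap.id : M →ₗ[Rᵐᵒᵖ] M) g)

/-- A left `R`-module `N` is flat if `- ⊗_R N` preserves injectivity. -/
def FlatLeft (N : Type u) [AddCommGroup N] [Module R N] : Prop :=
  ∀ (M M' : Type u) [AddCommGroup M] [Module Rᵐᵒᵖ M] [AddCommGroup M'] [Module Rᵐᵒᵖ M']
    (f : M →ₗ[Rᵐᵒᵖ] M'), Function.Injective f →
      Function.Injective (tmap f (LinearMap.id : N →ₗ[R] N))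

end NCT

open CategoryTheory Limits

/-- The complex of abelian groups `F^• ⊗_R N` obtained by tensoring a complex of right
`R`-modules termwise with a left `R`-module `N`. -/
noncomputable def tensCplx {R : Type u} [Ring R]
    (Fc : CochainComplex (ModuleCat.{u} Rᵐᵒᵖ) ℤ) (N : ModuleCat.{u} R) :
    CochainComplex AddCommGrpCat.{u} ℤ :=
  (((NCT.tensorBifunctor R).flip.obj N).mapHomologicalComplex (ComplexShape.up ℤ)).obj Fc

namespace PureAux

open NCT

variable {R : Type u} [Ring R]

/-- Right `R`-module structure on the character module of a left `R`-module. -/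
instance charRight (Y : Type u) [AddCommGroup Y] [Module R Y] :
    Module Rᵐᵒᵖ (CharacterModule Y) where
  smul r c := AddMonoidHom.comp c (DistribMulAction.toAddMonoidHom Y r.unop)
  one_smul c := DFunLike.ext _ _ fun y => by
    show c ((1 : Rᵐᵒᵖ).unop • y) = c y
    simp
  mul_smul r s c := DFunLike.ext _ _ fun y => by
    show c ((r * s).unop • y) = c (s.unop • r.unop • y)
    rw [MulOpposite.unop_mul, mul_smul]
  smul_zero r := DFunLike.ext _ _ fun y => rfl
  smul_add r c₁ c₂ := DFunLike.ext _ _ fun y => rfl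
  add_smul r s c := DFunLike.ext _ _ fun y => by
    show c ((r + s).unop • y) = c (r.unop • y) + c (s.unop • y)
    rw [MulOpposite.unop_add, add_smul, map_add]
  zero_smul c := DFunLike.ext _ _ fun y => by
    show c ((0 : Rᵐᵒᵖ).unop • y) = 0
    simp

lemma charRight_smul_apply {Y : Type u} [AddCommGroup Y] [Module R Y]
    (r : Rᵐᵒᵖ) (c : CharacterModule Y) (y : Y) :
    (r • c) y = c (r.unop • y) := rfl

variable {X Y : Type u} [AddCommGroup X] [Module Rᵐᵒᵖ X] [AddCommGroup Y] [Module R Y]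

private def toCharAux (f : X →ₗ[Rᵐᵒᵖ] CharacterModule Y) :
    X ⊗[ℤ] Y →ₗ[ℤ] AddCircle (1 : ℚ) :=
  TensorProduct.lift (LinearMap.mk₂ ℤ (fun x y => f x y)
    (fun x x' y => by show f (x + x') y = f x y + f x' y; rw [map_add]; rfl)
    (fun z x y => by show f (z • x) y = z • f x y; rw [map_zsmul]; rfl)
    (fun x y y' => by show f x (y + y') = f x y + f x y'; rw [map_add])
    (fun z x y => by show f x (z • y) = z • f x y; rw [map_zsmul]))

private lemma toCharAux_tmul (f : X →ₗ[Rᵐᵒᵖ] CharacterModule Y) (x : X) (y : Y) :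
    toCharAux f (x ⊗ₜ[ℤ] y) = f x y := rfl

/-- The tensor-hom correspondence, one direction. -/
def toChar (f : X →ₗ[Rᵐᵒᵖ] CharacterModule Y) : CharacterModule (Tens R X Y) :=
  QuotientAddGroup.lift (rel R X Y) (toCharAux f).toAddMonoidHom (by
    intro w hw
    have hle : rel R X Y ≤ (toCharAux f).toAddMonoidHom.ker := by
      rw [NCT.rel, AddSubgroup.closure_le]
      rintro _ ⟨r, x, y, rfl⟩
      simp only [SetLike.mem_coe, AddMonoidHom.mem_ker, map_sub,
        LinearMap.toAddMonoidHom_coe, toCharAux_tmul]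
      rw [f.map_smul, charRight_smul_apply]
      simp
    exact hle hw)

lemma toChar_mk_tmul (f : X →ₗ[Rᵐᵒᵖ] CharacterModule Y) (x : X) (y : Y) :
    toChar f (NCT.mk (x ⊗ₜ[ℤ] y)) = f x y := rfl

/-- The tensor-hom correspondence, the other direction. -/
def fromChar (ψ : CharacterModule (Tens R X Y)) : X →ₗ[Rᵐᵒᵖ] CharacterModule Y where
  toFun x :=
    { toFun := fun y => ψ (NCT.mk (x ⊗ₜ[ℤ] y))
      map_zero' := by
        show ψ (NCT.mk (x ⊗ₜ[ℤ] (0 : Y))) = 0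
        rw [TensorProduct.tmul_zero]; simp
      map_add' := fun y y' => by
        show ψ (NCT.mk (x ⊗ₜ[ℤ] (y + y'))) = ψ (NCT.mk (x ⊗ₜ[ℤ] y)) + ψ (NCT.mk (x ⊗ₜ[ℤ] y'))
        rw [TensorProduct.tmul_add, map_add, map_add] }
  map_add' x x' := DFunLike.ext _ _ fun y => by
    show ψ (NCT.mk ((x + x') ⊗ₜ[ℤ] y)) = ψ (NCT.mk (x ⊗ₜ[ℤ] y)) + ψ (NCT.mk (x' ⊗ₜ[ℤ] y))
    rw [TensorProduct.add_tmul, map_add, map_add]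
  map_smul' r x := DFunLike.ext _ _ fun y => by
    show ψ (NCT.mk ((r • x) ⊗ₜ[ℤ] y)) = ψ (NCT.mk (x ⊗ₜ[ℤ] (r.unop • y)))
    have h : NCT.mk (R := R) ((r • x) ⊗ₜ[ℤ] y) = NCT.mk (x ⊗ₜ[ℤ] (r.unop • y)) := by
      rw [← sub_eq_zero, ← map_sub]
      refine (QuotientAddGroup.eq_zero_iff _).2 ?_
      exact AddSubgroup.subset_closure ⟨r.unop, x, y, by rw [MulOpposite.op_unop]⟩
    rw [h]

lemma fromChar_apply (ψ : CharacterModule (Tens R X Y)) (x : X) (y : Y) :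
    fromChar ψ x y = ψ (NCT.mk (x ⊗ₜ[ℤ] y)) := rfl

end PureAux

/-- **Purity and acyclicity of tensor products.**
Let `R` be a ring, `M` a pure submodule of a left `R`-module `L` (i.e. for every right
`R`-module `N` the map `N ⊗_R M → N ⊗_R L` is injective), and `F^•` a complex of right
`R`-modules such that `F^• ⊗_R L` is acyclic.  Then `F^• ⊗_R M` is acyclic. -/

theorem tensor_acyclic_of_pure_submodule
    (R : Type u) [Ring R] (L : Type u) [AddCommGroup L] [Module R L]
    (M : Submodule R L)
    (hpure : ∀ (N : Type u) [AddCommGroup N] [Module Rᵐᵒᵖ N],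
      Function.Injective
        (NCT.tmap (LinearMap.id : N →ₗ[Rᵐᵒᵖ] N) M.subtype))
    (Fc : CochainComplex (ModuleCat.{u} Rᵐᵒᵖ) ℤ)
    (hL : ∀ n : ℤ, (tensCplx Fc (ModuleCat.of R L)).ExactAt n) :
    ∀ n : ℤ, (tensCplx Fc (ModuleCat.of R M)).ExactAt n := by
  classical
  -- Step 1: a section `s` of the restriction `CharacterModule L → CharacterModule M`.
  obtain ⟨s, hs⟩ : ∃ s : CharacterModule ↥M →ₗ[Rᵐᵒᵖ] CharacterModule L,
      ∀ (c : CharacterModule ↥M) (m : ↥M), s c (↑m : L) = c m := by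
    set N := CharacterModule ↥M
    have hinj : Function.Injective
        ((NCT.tmap (LinearMap.id : N →ₗ[Rᵐᵒᵖ] N) M.subtype).toIntLinearMap) :=
      hpure N
    obtain ⟨χ, hχ⟩ := CharacterModule.dual_surjective_of_injective _ hinj
      (PureAux.toChar (LinearMap.id : N →ₗ[Rᵐᵒᵖ] CharacterModule ↥M))
    refine ⟨PureAux.fromChar χ, fun c m => ?_⟩
    have h1 : NCT.tmap (LinearMap.id : N →ₗ[Rᵐᵒᵖ] N) M.subtype (NCT.mk (c ⊗ₜ[ℤ] m))
        = NCT.mk (c ⊗ₜ[ℤ] (↑m : L)) := by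
      rw [NCT.tmap_mk]; rfl
    have h2 := DFunLike.congr_fun hχ (NCT.mk (c ⊗ₜ[ℤ] m))
    rw [PureAux.fromChar_apply, ← h1]
    exact h2.trans (PureAux.toChar_mk_tmul _ c m)
  intro n
  have hprev : (ComplexShape.up ℤ).prev n = n - 1 :=
    (ComplexShape.up ℤ).prev_eq' (by simp)
  have hnext : (ComplexShape.up ℤ).next n = n + 1 :=
    (ComplexShape.up ℤ).next_eq' rfl
  rw [HomologicalComplex.exactAt_iff' _ (n - 1) n (n + 1) hprev hnext,
    ShortComplex.ab_exact_iff]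
  intro x hx
  by_contra hcon
  push_neg at hcon
  -- reinterpret things concretely
  set A₀ : Type u := (Fc.X (n - 1) : Type u)
  set A₁ : Type u := (Fc.X n : Type u)
  set A₂ : Type u := (Fc.X (n + 1) : Type u)
  set d₀ : _ →ₗ[Rᵐᵒᵖ] _ := (Fc.d (n - 1) n).hom
  set d₁ : _ →ₗ[Rᵐᵒᵖ] _ := (Fc.d n (n + 1)).hom
  have hx' : NCT.tmap d₁ (LinearMap.id : ↥M →ₗ[R] ↥M) x = 0 := hx
  have hcon' : ∀ y : NCT.Tens R A₀ ↥M,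
      NCT.tmap d₀ (LinearMap.id : ↥M →ₗ[R] ↥M) y ≠ x := hcon
  -- Step 2: a character `φ` vanishing on boundaries but not on `x`.
  set Bd : AddSubgroup (NCT.Tens R A₁ ↥M) :=
    (NCT.tmap d₀ (LinearMap.id : ↥M →ₗ[R] ↥M)).range with hBd
  have hxBd : QuotientAddGroup.mk' Bd x ≠ 0 := by
    intro h
    obtain ⟨y, hy⟩ := (QuotientAddGroup.eq_zero_iff _).1 h
    exact hcon' y hy
  obtain ⟨χ₀, hχ₀⟩ := CharacterModule.exists_character_apply_ne_zero_of_ne_zero hxBd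
  set φ : CharacterModule (NCT.Tens R A₁ ↥M) :=
    AddMonoidHom.comp χ₀ (QuotientAddGroup.mk' Bd) with hφ
  have hφBd : ∀ z, φ (NCT.tmap d₀ (LinearMap.id : ↥M →ₗ[R] ↥M) z) = 0 := by
    intro z
    have : QuotientAddGroup.mk' Bd (NCT.tmap d₀ (LinearMap.id : ↥M →ₗ[R] ↥M) z) = 0 :=
      (QuotientAddGroup.eq_zero_iff _).2 ⟨z, rfl⟩
    show χ₀ _ = 0
    rw [this, map_zero]
  have hφx : φ x ≠ 0 := hχ₀
  -- Step 3: transfer to `L` via the section `s`.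
  set f : A₁ →ₗ[Rᵐᵒᵖ] CharacterModule ↥M := PureAux.fromChar φ with hf
  have hfd : ∀ x' : A₀, f (d₀ x') = 0 := by
    intro x'
    refine DFunLike.ext _ _ fun m => ?_
    show φ (NCT.mk ((d₀ x') ⊗ₜ[ℤ] m)) = 0
    have h1 : NCT.mk (R := R) ((d₀ x') ⊗ₜ[ℤ] m)
        = NCT.tmap d₀ (LinearMap.id : ↥M →ₗ[R] ↥M) (NCT.mk (x' ⊗ₜ[ℤ] m)) := by
      rw [NCT.tmap_mk]; rfl
    rw [h1]
    exact hφBd _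
  set g : A₁ →ₗ[Rᵐᵒᵖ] CharacterModule L := s ∘ₗ f with hg
  set ψ : CharacterModule (NCT.Tens R A₁ L) := PureAux.toChar g with hψ
  have hψBd : ∀ z : NCT.Tens R A₀ L,
      ψ (NCT.tmap d₀ (LinearMap.id : L →ₗ[R] L) z) = 0 := by
    intro z
    obtain ⟨w, rfl⟩ := NCT.mk_surjective z
    rw [NCT.tmap_mk]
    induction w using TensorProduct.induction_on with
    | zero => simp
    | tmul x' l =>
      have h1 : (NCT.intMap d₀ (LinearMap.id : L →ₗ[R] L)) (x' ⊗ₜ[ℤ] l)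
          = (d₀ x') ⊗ₜ[ℤ] l := rfl
      rw [h1]
      show g (d₀ x') l = 0
      show s (f (d₀ x')) l = 0
      rw [hfd x', map_zero]
      rfl
    | add w₁ w₂ ih₁ ih₂ => simp only [map_add, ih₁, ih₂, add_zero]
  -- Step 4: `x` maps to a cycle in the `L`-complex, hence a boundary.
  set ξ : NCT.Tens R A₁ L := NCT.tmap LinearMap.id M.subtype x with hξ
  have hdξ : NCT.tmap d₁ (LinearMap.id : L →ₗ[R] L) ξ = 0 := by
    have heq : NCT.tmap d₁ (LinearMap.id : L →ₗ[R] L) ξ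
        = NCT.tmap (LinearMap.id : A₂ →ₗ[Rᵐᵒᵖ] A₂) M.subtype
            (NCT.tmap d₁ (LinearMap.id : ↥M →ₗ[R] ↥M) x) := by
      rw [hξ]
      have e1 := NCT.tmap_tmap d₁ (LinearMap.id : A₁ →ₗ[Rᵐᵒᵖ] A₁) (LinearMap.id : L →ₗ[R] L) M.subtype x
      have e2 := NCT.tmap_tmap (LinearMap.id : A₂ →ₗ[Rᵐᵒᵖ] A₂) d₁ M.subtype (LinearMap.id : ↥M →ₗ[R] ↥M) x
      simp only [LinearMap.comp_id, LinearMap.id_comp] at e1 e2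
      exact e1.trans e2.symm
    rw [heq, hx', map_zero]
  have hLn := hL n
  rw [HomologicalComplex.exactAt_iff' _ (n - 1) n (n + 1) hprev hnext,
    ShortComplex.ab_exact_iff] at hLn
  obtain ⟨y, hy⟩ := hLn ξ hdξ
  have hy' : NCT.tmap d₀ (LinearMap.id : L →ₗ[R] L) y = ξ := hy
  have hψξ : ψ ξ = 0 := by rw [← hy']; exact hψBd y
  -- Step 5: but `ψ ξ = φ x ≠ 0`.
  have hcompat : ∀ z : NCT.Tens R A₁ ↥M,
      ψ (NCT.tmap (LinearMap.id : A₁ →ₗ[Rᵐᵒᵖ] A₁) M.subtype z) = φ z := by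
    intro z
    obtain ⟨w, rfl⟩ := NCT.mk_surjective z
    rw [NCT.tmap_mk]
    induction w using TensorProduct.induction_on with
    | zero => simp
    | tmul x' m =>
      have h1 : (NCT.intMap (LinearMap.id : A₁ →ₗ[Rᵐᵒᵖ] A₁) M.subtype) (x' ⊗ₜ[ℤ] m)
          = x' ⊗ₜ[ℤ] (↑m : L) := rfl
      rw [h1]
      show g x' (↑m : L) = φ (NCT.mk (x' ⊗ₜ[ℤ] m))
      show s (f x') (↑m : L) = φ (NCT.mk (x' ⊗ₜ[ℤ] m))
      rw [hs (f x') m]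
      rfl
    | add w₁ w₂ ih₁ ih₂ => simp only [map_add, ih₁, ih₂]
  exact hφx (by rw [← hcompat x, ← hξ, hψξ])
end
end

section
/- Let L^• be a bounded acyclic complex of left R-modules and I^• a complex of injective left R-modules. Then the total Hom complex Hom_R(L^•, I^•) is an acyclic complex of abelian groups. -/
open CategoryTheory

universe u

namespace HomAcyclicAux

open CochainComplex HomComplex HomologicalComplex

lemma eqToHom_eq_id {C : Type*} [Category C] {X : C} (h : X = X) : eqToHom h = 𝟙 X := by
  rfl

lemma d_comp_eqToHom {C : Type*} [Category C] [Preadditive C]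
    (K : CochainComplex C ℤ) {i j j' : ℤ} (h : j = j') :
    K.d i j ≫ eqToHom (congrArg K.X h) = K.d i j' := by
  subst h; simp

lemma eqToHom_comp_d {C : Type*} [Category C] [Preadditive C]
    (K : CochainComplex C ℤ) {i i' j : ℤ} (h : i' = i) :
    eqToHom (congrArg K.X h) ≫ K.d i j = K.d i' j := by
  subst h; simp

variable {R : Type u} [Ring R]
variable (Lc Ic : CochainComplex (ModuleCat.{u} R) ℤ)

lemma hom_eq_zero_of_subsingleton {M N : ModuleCat.{u} R} (h : Subsingleton M) (f : M ⟶ N) :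
    f = 0 := by
  ext x
  rw [Subsingleton.elim x 0]
  simp

/-- Lifting hypothesis. -/
def LiftHyp : Prop :=
  ∀ (p j : ℤ) (w : Lc.X p ⟶ Ic.X j), Lc.d (p-1) p ≫ w = 0 →
    ∃ u : Lc.X (p+1) ⟶ Ic.X j, Lc.d p (p+1) ≫ u = w

open Classical in
noncomputable def auxLift (hl : LiftHyp Lc Ic) (p j : ℤ) (w : Lc.X p ⟶ Ic.X j) :
    Lc.X (p+1) ⟶ Ic.X j :=
  if h : Lc.d (p-1) p ≫ w = 0 then (hl p j w h).choose else 0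

lemma auxLift_spec (hl : LiftHyp Lc Ic) (p j : ℤ) (w : Lc.X p ⟶ Ic.X j)
    (h : Lc.d (p-1) p ≫ w = 0) : Lc.d p (p+1) ≫ auxLift Lc Ic hl p j w = w := by
  rw [auxLift, dif_pos h]
  exact (hl p j w h).choose_spec

noncomputable def myH (hl : LiftHyp Lc Ic) (n : ℤ) (z : Cochain Lc Ic n) (a : ℤ) :
    ∀ p : ℤ, (Lc.X p ⟶ Ic.X (p + n - 1))
  | p =>
    if hp : p < a then 0
    else
      eqToHom (congrArg Lc.X (by omega : p = (p-1)+1)) ≫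
        auxLift Lc Ic hl (p-1) (p+n-1)
          (n.negOnePow • (z.v (p-1) (p+n-1) (by omega) -
            myH hl n z a (p-1) ≫ eqToHom (congrArg Ic.X (by omega : (p-1)+n-1 = p+n-2)) ≫
              Ic.d (p+n-2) (p+n-1)))
  termination_by p => (p - a + 1).toNat
  decreasing_by omega

lemma myH_of_lt (hl : LiftHyp Lc Ic) (n : ℤ) (z : Cochain Lc Ic n) (a : ℤ) (p : ℤ)
    (hp : p < a) : myH Lc Ic hl n z a p = 0 := by
  rw [myH]
  exact dif_pos hp

lemma myH_of_not_lt (hl : LiftHyp Lc Ic) (n : ℤ) (z : Cochain Lc Ic n) (a : ℤ) (p : ℤ)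
    (hp : ¬ p < a) :
    myH Lc Ic hl n z a p =
      eqToHom (congrArg Lc.X (by omega : p = (p-1)+1)) ≫
        auxLift Lc Ic hl (p-1) (p+n-1)
          (n.negOnePow • (z.v (p-1) (p+n-1) (by omega) -
            myH Lc Ic hl n z a (p-1) ≫ eqToHom (congrArg Ic.X (by omega : (p-1)+n-1 = p+n-2)) ≫
              Ic.d (p+n-2) (p+n-1))) := by
  rw [myH]
  exact dif_neg hp

lemma d_comp_myH_succ (hl : LiftHyp Lc Ic) (n : ℤ) (z : Cochain Lc Ic n) (a : ℤ)
    (p s q : ℤ) (hs : p + 1 = s) (hq : p + n = q) (hsa : ¬ s < a)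
    (hw : Lc.d (p-1) p ≫ (n.negOnePow • (z.v p q hq -
        myH Lc Ic hl n z a p ≫ eqToHom (congrArg Ic.X (show p+n-1 = q-1 by omega)) ≫
          Ic.d (q-1) q)) = 0) :
    Lc.d p s ≫ myH Lc Ic hl n z a s ≫ eqToHom (congrArg Ic.X (show s+n-1 = q by omega)) =
      n.negOnePow • (z.v p q hq -
        myH Lc Ic hl n z a p ≫ eqToHom (congrArg Ic.X (show p+n-1 = q-1 by omega)) ≫
          Ic.d (q-1) q) := by
  obtain rfl : p = s - 1 := by omega
  obtain rfl : q = s + n - 1 := by omega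
  rw [eqToHom_comp_d] at hw ⊢
  rw [myH_of_not_lt Lc Ic hl n z a s hsa, eqToHom_comp_d]
  simp only [eqToHom_eq_id, Category.comp_id]
  rw [← Category.assoc, d_comp_eqToHom,
    auxLift_spec Lc Ic hl (s-1) (s+n-1) _ hw]
  all_goals omega

lemma myH_eq (hl : LiftHyp Lc Ic) (n : ℤ) (z : Cochain Lc Ic n) (a : ℤ)
    (hsub : ∀ p, p < a → Subsingleton (Lc.X p))
    (hz : HomComplex.δ n (n+1) z = 0) :
    ∀ (p s q : ℤ) (hs : p + 1 = s) (hq : p + n = q),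
    myH Lc Ic hl n z a p ≫ eqToHom (congrArg Ic.X (show p+n-1 = q-1 by omega)) ≫
        Ic.d (q-1) q +
      n.negOnePow • (Lc.d p s ≫ myH Lc Ic hl n z a s ≫
        eqToHom (congrArg Ic.X (show s+n-1 = q by omega))) =
    z.v p q hq := by
  suffices h : ∀ (k : ℕ) (p s q : ℤ) (hs : p + 1 = s) (hq : p + n = q), p < a + k →
      myH Lc Ic hl n z a p ≫ eqToHom (congrArg Ic.X (show p+n-1 = q-1 by omega)) ≫
          Ic.d (q-1) q +
        n.negOnePow • (Lc.d p s ≫ myH Lc Ic hl n z a s ≫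
          eqToHom (congrArg Ic.X (show s+n-1 = q by omega))) =
      z.v p q hq by
    intro p s q hs hq
    exact h (p - a + 1).toNat p s q hs hq (by omega)
  intro k
  induction k with
  | zero =>
    intro p s q hs hq hp
    have hp' : p < a := by omega
    rw [myH_of_lt Lc Ic hl n z a p hp',
      hom_eq_zero_of_subsingleton (hsub p hp') (Lc.d p s),
      hom_eq_zero_of_subsingleton (hsub p hp') (z.v p q hq)]
    simp
  | succ k ih =>
    intro p s q hs hq hp
    by_cases hcase : p < a + k
    · exact ih p s q hs hq hcase
    · have hpa : ¬ p < a := by omega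
      have hsa : ¬ s < a := by omega
      -- the equation at p - 1
      have hE := ih (p-1) p (q-1) (by omega) (by omega) (by omega)
      have h2 : Lc.d (p-1) p ≫ myH Lc Ic hl n z a p ≫
          eqToHom (congrArg Ic.X (show p+n-1 = q-1 by omega)) =
          n.negOnePow • (z.v (p-1) (q-1) (by omega) -
            myH Lc Ic hl n z a (p-1) ≫
              eqToHom (congrArg Ic.X (show p-1+n-1 = q-1-1 by omega)) ≫
                Ic.d (q-1-1) (q-1)) := by
        have h3 : n.negOnePow • (Lc.d (p-1) p ≫ myH Lc Ic hl n z a p ≫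
            eqToHom (congrArg Ic.X (show p+n-1 = q-1 by omega))) =
            z.v (p-1) (q-1) (by omega) -
              myH Lc Ic hl n z a (p-1) ≫
                eqToHom (congrArg Ic.X (show p-1+n-1 = q-1-1 by omega)) ≫
                  Ic.d (q-1-1) (q-1) := by
          rw [← hE]; abel
        rw [← h3, smul_smul, Int.units_mul_self, one_smul]
      -- cocycle identity
      have hc := Cochain.congr_v hz (p-1) q (by omega)
      rw [HomComplex.δ_v n (n+1) rfl z (p-1) q (by omega) (q-1) p (by omega) (by omega),
        Cochain.zero_v] at hc
      have hc' : z.v (p-1) (q-1) (by omega) ≫ Ic.d (q-1) q =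
          n.negOnePow • (Lc.d (p-1) p ≫ z.v p q hq) := by
        rwa [Int.negOnePow_succ, Units.neg_smul, add_neg_eq_zero] at hc
      -- the side condition for the lift
      have hw : Lc.d (p-1) p ≫ (n.negOnePow • (z.v p q hq -
          myH Lc Ic hl n z a p ≫ eqToHom (congrArg Ic.X (show p+n-1 = q-1 by omega)) ≫
            Ic.d (q-1) q)) = 0 := by
        rw [Linear.comp_units_smul, Preadditive.comp_sub]
        rw [show Lc.d (p-1) p ≫ myH Lc Ic hl n z a p ≫
            eqToHom (congrArg Ic.X (show p+n-1 = q-1 by omega)) ≫ Ic.d (q-1) q =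
          (Lc.d (p-1) p ≫ myH Lc Ic hl n z a p ≫
            eqToHom (congrArg Ic.X (show p+n-1 = q-1 by omega))) ≫ Ic.d (q-1) q by
            simp only [Category.assoc]]
        rw [h2, Linear.units_smul_comp, Preadditive.sub_comp, Category.assoc,
          Category.assoc, HomologicalComplex.d_comp_d, Limits.comp_zero,
          Limits.comp_zero, sub_zero, hc',
          smul_smul, Int.units_mul_self, one_smul, sub_self, smul_zero]
      rw [d_comp_myH_succ Lc Ic hl n z a p s q hs hq hsa hw,
        smul_smul, Int.units_mul_self, one_smul]
      abel

end HomAcyclicAux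


open CochainComplex HomComplex HomAcyclicAux

/-- **Hom from a bounded acyclic complex into a termwise-injective complex.**
Let `L^•` be a bounded acyclic complex of left `R`-modules and `I^•` a complex of
injective left `R`-modules.  Then the total Hom complex `Hom_R(L^•, I^•)` is an acyclic
complex of abelian groups. -/
theorem homComplex_acyclic_of_bounded_acyclic_of_termwise_injective
    (R : Type u) [Ring R]
    (Lc : CochainComplex (ModuleCat.{u} R) ℤ)
    (hbdd : ∃ a b : ℤ, ∀ n : ℤ, (n < a ∨ b < n) → Subsingleton (Lc.X n))
    (hacyclic : ∀ n : ℤ, Lc.ExactAt n)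
    (Ic : CochainComplex (ModuleCat.{u} R) ℤ)
    (hinj : ∀ n : ℤ, Module.Injective R (Ic.X n)) :
    ∀ n : ℤ, (CochainComplex.HomComplex Lc Ic).ExactAt n := by
  obtain ⟨a, b, hb⟩ := hbdd
  have hsub : ∀ p, p < a → Subsingleton (Lc.X p) := fun p hp => hb p (Or.inl hp)
  -- the lifting property
  have hl : LiftHyp Lc Ic := by
    intro p j w hw
    have hex := hacyclic p
    rw [Lc.exactAt_iff' (p-1) p (p+1) (by simp) (by simp),
      ShortComplex.moduleCat_exact_iff] at hex
    haveI : CategoryTheory.Injective (Ic.X j) := by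
      have h2 := Module.injective_object_of_injective_module (R := R) (M := ↥(Ic.X j))
        (inj := hinj j)
      exact h2
    let d0 : ↥(Lc.X p) →ₗ[R] ↥(Lc.X (p+1)) := (Lc.d p (p+1)).hom
    have hker : LinearMap.ker d0 ≤ LinearMap.ker w.hom := by
      intro x hx
      obtain ⟨v, hv⟩ := hex x (LinearMap.mem_ker.mp hx)
      have h5 : w (Lc.d (p-1) p v) = 0 := by
        have h6 := LinearMap.congr_fun (congrArg ModuleCat.Hom.hom hw) v
        exact h6
      rw [LinearMap.mem_ker, ← hv]
      exact h5
    let W : ModuleCat.of R (LinearMap.range d0) ⟶ Ic.X j :=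
      ModuleCat.ofHom ((Submodule.liftQ _ w.hom hker) ∘ₗ (LinearMap.quotKerEquivRange d0).symm.toLinearMap)
    let ι : ModuleCat.of R (LinearMap.range d0) ⟶ Lc.X (p+1) := ModuleCat.ofHom (LinearMap.range d0).subtype
    haveI : Mono ι := (ModuleCat.mono_iff_injective ι).mpr (Submodule.injective_subtype _)
    refine ⟨Injective.factorThru W ι, ?_⟩
    apply ModuleCat.hom_ext
    apply LinearMap.ext
    intro x
    have e0 : (Lc.d p (p+1) ≫ Injective.factorThru W ι) x
        = Injective.factorThru W ι (d0 x) := rfl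
    have e1 : Injective.factorThru W ι (d0 x)
        = (ι ≫ Injective.factorThru W ι) (⟨d0 x, LinearMap.mem_range_self d0 x⟩ :
            LinearMap.range d0) := rfl
    have e2 : (LinearMap.quotKerEquivRange d0).symm
        (⟨d0 x, LinearMap.mem_range_self d0 x⟩ : LinearMap.range d0)
        = Submodule.Quotient.mk x := by
      rw [LinearEquiv.symm_apply_eq]
      exact Subtype.ext (LinearMap.quotKerEquivRange_apply_mk (f := d0) x).symm
    rw [e0, e1, Injective.comp_factorThru]
    show (Submodule.liftQ _ w.hom hker) ((LinearMap.quotKerEquivRange d0).symm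
      (⟨d0 x, LinearMap.mem_range_self d0 x⟩ : LinearMap.range d0)) = w x
    rw [e2, Submodule.liftQ_apply]
  intro n
  rw [HomologicalComplex.exactAt_iff' _ (n-1) n (n+1) (by simp) (by simp),
    ShortComplex.ab_exact_iff]
  intro z hzz
  have hz' : HomComplex.δ n (n+1) (z : Cochain Lc Ic n) = 0 := hzz
  refine ⟨Cochain.mk (fun p q hpq => myH Lc Ic hl n z a p ≫
    eqToHom (congrArg Ic.X (show p+n-1 = q by omega))), ?_⟩
  show HomComplex.δ (n-1) n _ = z
  refine Cochain.ext _ _ (fun p q hpq => ?_)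
  obtain rfl : q = p + n := by omega
  rw [HomComplex.δ_v (n-1) n (by omega) _ p (p+n) hpq (p+n-1) (p+1) (by omega) rfl]
  simp only [Cochain.mk_v, Category.assoc]
  exact myH_eq Lc Ic hl n z a hsub hz' p (p+1) (p+n) rfl (by omega)
end

section
/- Let R be a ring of cardinality at most ν for an infinite cardinal ν, let λ be a regular cardinal with ν^{<λ} = ν, and let M be an R-module. Then for every subset X ⊆ M of cardinality at most ν there exists a submodule N ⊆ M of cardinality at most ν containing X such that every system of fewer than λ nonhomogeneous R-linear equations in fewer than λ variables with parameters from N that has a solution in M has a solution in N. -/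
universe u

open Cardinal Submodule

lemma myMkFinsuppLe (α β : Type u) [Zero β] : #(α →₀ β) ≤ max (max #α #β) ℵ₀ := by
  rcases subsingleton_or_nontrivial β with h | h
  · exact (Cardinal.mk_le_aleph0).trans (le_max_right _ _)
  rcases isEmpty_or_nonempty α with h2 | h2
  · haveI : Subsingleton (α →₀ β) := ⟨fun f g => Finsupp.ext fun a => isEmptyElim a⟩
    exact (Cardinal.mk_le_aleph0).trans (le_max_right _ _)
  rcases finite_or_infinite α with h3 | h3
  · haveI : Fintype α := Fintype.ofFinite α
    rw [Cardinal.mk_finsupp_of_fintype]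
    calc (#β) ^ (Fintype.card α : Cardinal) ≤ (max (max #α #β) ℵ₀) ^ (Fintype.card α : Cardinal) :=
          Cardinal.power_le_power_right ((le_max_right _ _).trans (le_max_left _ _))
      _ ≤ max (max #α #β) ℵ₀ := Cardinal.power_nat_le (le_max_right _ _)
  · rw [Cardinal.mk_finsupp_of_infinite]
    exact le_max_left _ _

lemma myMkSpanLe (R : Type u) [Ring R] (M : Type u) [AddCommGroup M] [Module R M] (s : Set M) :
    #(span R s) ≤ max (max #s #R) ℵ₀ := by
  refine le_trans ?_ (myMkFinsuppLe s R)
  have h := Finsupp.span_eq_range_linearCombination R s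
  have : #(span R s) ≤ #(Set.range (Finsupp.linearCombination R ((↑) : s → M))) := by
    rw [h]; exact le_of_eq (by congr 1)
  exact this.trans Cardinal.mk_range_le

lemma myStep (R : Type u) [Ring R] (M : Type u) [AddCommGroup M] [Module Rᵐᵒᵖ M]
    (ν : Cardinal.{u}) (hν : ℵ₀ ≤ ν) (hRν : #R ≤ ν)
    (lam : Cardinal.{u}) (hlam : lam.IsRegular) (hpow : ν ^< lam = ν) (hlamν : lam ≤ ν)
    (T : Type u) (hT : #T = ν) (N₀ : Submodule Rᵐᵒᵖ M) :
    ∃ N₁ : Submodule Rᵐᵒᵖ M, N₀ ≤ N₁ ∧ (#N₀ ≤ ν → #N₁ ≤ ν) ∧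
      ∀ S : Set ((T →₀ R) × M), #S < lam → (∀ q ∈ S, q.2 ∈ N₀) →
        (∃ x : T → M, ∀ q ∈ S, (q.1).sum (fun t r => MulOpposite.op r • x t) = q.2) →
        ∃ x : T → M, (∀ t, x t ∈ N₁) ∧
          ∀ q ∈ S, (q.1).sum (fun t r => MulOpposite.op r • x t) = q.2 := by
  classical
  set A : Set ((T →₀ R) × M) := {q | q.2 ∈ N₀} with hA
  set Sys := {S : Set ((T →₀ R) × M) // #S < lam ∧ S ⊆ A ∧
      ∃ x : T → M, ∀ q ∈ S, (q.1).sum (fun t r => MulOpposite.op r • x t) = q.2} with hSys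
  have hsol : ∀ S : Sys, ∃ x : T → M,
      ∀ q ∈ S.1, (q.1).sum (fun t r => MulOpposite.op r • x t) = q.2 := fun S => S.2.2.2
  choose sol hsol' using hsol
  set Y : Set M := (N₀ : Set M) ∪ ⋃ S : Sys, Set.range (sol S) with hY
  refine ⟨span Rᵐᵒᵖ Y, fun m hm => subset_span (Or.inl hm), ?_, ?_⟩
  · -- cardinality
    intro h₀
    have hAcard : #A ≤ ν := by
      have hTR : #(T →₀ R) ≤ ν := by
        refine (myMkFinsuppLe T R).trans ?_
        simp only [hT, max_le_iff]
        exact ⟨⟨le_rfl, hRν⟩, hν⟩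
      have hemb : #A ≤ #((T →₀ R) × N₀) := by
        refine Cardinal.mk_le_of_injective
          (f := fun q => (q.1.1, ⟨q.1.2, q.2⟩)) ?_
        rintro ⟨⟨c₁, m₁⟩, h₁⟩ ⟨⟨c₂, m₂⟩, h₂⟩ h
        simp only [Prod.mk.injEq, Subtype.mk.injEq] at h
        exact Subtype.ext (by simp [h.1, h.2])
      refine hemb.trans ?_
      rw [Cardinal.mk_prod, Cardinal.lift_id, Cardinal.lift_id]
      calc #(T →₀ R) * #N₀ ≤ ν * ν := mul_le_mul' hTR h₀
        _ = ν := Cardinal.mul_eq_self hν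
    have hSysCard : #Sys ≤ ν := by
      rw [hSys]
      have hinjwo : IsWellOrder lam.ord.ToType (· < ·) := isWellOrder_lt
      set c : lam.ord.ToType → Cardinal.{u} :=
        fun i => (@Ordinal.typein lam.ord.ToType (· < ·) isWellOrder_lt i).card with hc
      have hci : ∀ i, c i < lam := fun i =>
        Cardinal.lt_ord.1 (by
          simpa [Ordinal.type_toType] using
            @Ordinal.typein_lt_type lam.ord.ToType (· < ·) isWellOrder_lt i)
      set 𝒮 : lam.ord.ToType → Set (Set ((T →₀ R) × M)) :=
        fun i => {S | S ⊆ A ∧ #S ≤ c i} with h𝒮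
      have hmem : ∀ S : {S : Set ((T →₀ R) × M) // #S < lam ∧ S ⊆ A ∧
          ∃ x : T → M, ∀ q ∈ S, (q.1).sum (fun t r => MulOpposite.op r • x t) = q.2},
          S.1 ∈ ⋃ i, 𝒮 i := by
        rintro ⟨S, hS, hSA, -⟩
        have : (#S).ord < @Ordinal.type lam.ord.ToType (· < ·) isWellOrder_lt := by
          rw [Ordinal.type_toType]; exact Cardinal.ord_lt_ord.2 hS
        obtain ⟨i, hi⟩ := @Ordinal.typein_surj lam.ord.ToType (· < ·) isWellOrder_lt _ this
        refine Set.mem_iUnion.2 ⟨i, hSA, ?_⟩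
        rw [hc]; dsimp only; rw [hi, Cardinal.card_ord]
      have hinj : #{S : Set ((T →₀ R) × M) // #S < lam ∧ S ⊆ A ∧
          ∃ x : T → M, ∀ q ∈ S, (q.1).sum (fun t r => MulOpposite.op r • x t) = q.2}
          ≤ #(⋃ i, 𝒮 i) := by
        refine Cardinal.mk_le_of_injective (f := fun S => ⟨S.1, hmem S⟩) ?_
        intro S S' h
        simp only [Subtype.mk.injEq] at h
        exact Subtype.ext h
      refine hinj.trans ((Cardinal.mk_iUnion_le _).trans ?_)
      have h1 : ∀ i, #(𝒮 i) ≤ ν := by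
        intro i
        refine le_trans (Cardinal.mk_bounded_subset_le A (c i)) ?_
        have hbase : max #A ℵ₀ ≤ ν := max_le hAcard hν
        calc (max #A ℵ₀) ^ (c i) ≤ ν ^ (c i) := Cardinal.power_le_power_right hbase
          _ ≤ ν ^< lam := Cardinal.le_powerlt ν (hci i)
          _ = ν := hpow
      have hBcard : #(lam.ord.ToType) = lam := by rw [Cardinal.mk_toType, Cardinal.card_ord]
      calc #(lam.ord.ToType) * ⨆ i, #(𝒮 i) ≤ lam * ν :=
            mul_le_mul' hBcard.le (ciSup_le' h1)
        _ ≤ max (max lam ν) ℵ₀ := Cardinal.mul_le_max _ _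
        _ ≤ ν := by simp [max_le_iff, hlamν, hν]
    have hYcard : #Y ≤ ν := by
      rw [hY]
      refine (Cardinal.mk_union_le _ _).trans ?_
      have h2 : #(⋃ S : Sys, Set.range (sol S)) ≤ ν := by
        refine (Cardinal.mk_iUnion_le _).trans ?_
        have : ∀ S : Sys, #(Set.range (sol S)) ≤ ν := fun S =>
          Cardinal.mk_range_le.trans (le_of_eq hT)
        calc #Sys * ⨆ S, #(Set.range (sol S)) ≤ ν * ν :=
              mul_le_mul' hSysCard (ciSup_le' this)
          _ = ν := Cardinal.mul_eq_self hν
      calc #N₀ + #(⋃ S : Sys, Set.range (sol S)) ≤ ν + ν := add_le_add h₀ h2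
        _ = ν := Cardinal.add_eq_self hν
    refine (myMkSpanLe Rᵐᵒᵖ M Y).trans ?_
    have hRop : #(Rᵐᵒᵖ) = #R := Cardinal.mk_congr MulOpposite.opEquiv.symm
    simp only [max_le_iff]
    exact ⟨⟨hYcard, by rw [hRop]; exact hRν⟩, hν⟩
  · intro S hS hSA hsolM
    have hmem : S ∈ {S : Set ((T →₀ R) × M) | #S < lam ∧ S ⊆ A ∧
        ∃ x : T → M, ∀ q ∈ S, (q.1).sum (fun t r => MulOpposite.op r • x t) = q.2} :=
      ⟨hS, hSA, hsolM⟩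
    refine ⟨sol ⟨S, hmem⟩, fun t => subset_span (Or.inr ?_), hsol' ⟨S, hmem⟩⟩
    exact Set.mem_iUnion.2 ⟨⟨S, hmem⟩, Set.mem_range_self t⟩

/-- **Lemma (Hill-type closure lemma).**
Let `R` be a ring of cardinality at most `ν` for an infinite cardinal `ν`, let `λ` be
a regular cardinal with `ν ^< λ = ν`, and let `M` be a (right) `R`-module.  Then for every
subset `X ⊆ M` of cardinality at most `ν` there exists a submodule `N ⊆ M` of cardinality
at most `ν` containing `X` such that every system of fewer than `λ` nonhomogeneous
`R`-linear equations in fewer than `λ` variables with parameters from `N` that has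
a solution in `M` has a solution in `N`. -/
theorem exists_solution_closed_submodule_of_small
    (R : Type u) [Ring R] (M : Type u) [AddCommGroup M] [Module Rᵐᵒᵖ M]
    (ν : Cardinal.{u}) (hν : Cardinal.aleph0 ≤ ν) (hRν : Cardinal.mk R ≤ ν)
    (lam : Cardinal.{u}) (hlam : lam.IsRegular) (hpow : ν ^< lam = ν)
    (X : Set M) (hX : Cardinal.mk X ≤ ν) :
    ∃ N : Submodule Rᵐᵒᵖ M, X ⊆ (N : Set M) ∧ Cardinal.mk N ≤ ν ∧
      ∀ (V E : Type u), Cardinal.mk V < lam → Cardinal.mk E < lam →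
        ∀ (coef : E → V →₀ R) (param : E → M), (∀ e, param e ∈ N) →
          (∃ x : V → M, ∀ e, (coef e).sum (fun v r => MulOpposite.op r • x v) = param e) →
          ∃ x : V → M, (∀ v, x v ∈ N) ∧
            ∀ e, (coef e).sum (fun v r => MulOpposite.op r • x v) = param e := by
  classical
  have hlamν : lam ≤ ν := by
    by_contra hcon
    push_neg at hcon
    have h1 : ν ^ ν ≤ ν := by
      have := Cardinal.le_powerlt ν hcon
      rwa [hpow] at this
    have h2 : ν < ν ^ ν := by
      refine (Cardinal.cantor ν).trans_le (Cardinal.power_le_power_right ?_)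
      exact le_trans (by exact_mod_cast (Cardinal.nat_lt_aleph0 2).le) hν
    exact absurd (h2.trans_le h1) (lt_irrefl ν)
  obtain ⟨T, hT⟩ : ∃ T : Type u, #T = ν := ⟨ν.out, Cardinal.mk_out ν⟩
  choose φ hφ₁ hφ₂ hφ₃ using fun N₀ => myStep R M ν hν hRν lam hlam hpow hlamν T hT N₀
  classical
  obtain ⟨g, hg⟩ : ∃ g : lam.ord.ToType → Submodule Rᵐᵒᵖ M, ∀ i,
      g i = φ (span Rᵐᵒᵖ (X ∪ ⋃ j : {k : lam.ord.ToType // k < i}, (g j.1 : Set M))) :=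
    ⟨WellFounded.fix wellFounded_lt (fun i rec =>
        φ (span Rᵐᵒᵖ (X ∪ ⋃ j : {k // k < i}, (rec j.1 j.2 : Set M)))),
     fun i => WellFounded.fix_eq _ _ i⟩
  set inp : lam.ord.ToType → Submodule Rᵐᵒᵖ M :=
    fun i => span Rᵐᵒᵖ (X ∪ ⋃ j : {k : lam.ord.ToType // k < i}, (g j.1 : Set M)) with hinp
  have hg' : ∀ i, g i = φ (inp i) := hg
  have hXinp : ∀ i, X ⊆ (inp i : Set M) := fun i =>
    Set.subset_union_left.trans subset_span
  have hinple : ∀ i, inp i ≤ g i := fun i => (hg' i).symm ▸ hφ₁ (inp i)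
  have hmono0 : ∀ j i, j < i → g j ≤ inp i := fun j i h m hm =>
    subset_span (Or.inr (Set.mem_iUnion.2 ⟨⟨j, h⟩, hm⟩))
  have hmono : Monotone g := by
    intro j i h
    rcases eq_or_lt_of_le h with rfl | h
    · exact le_rfl
    · exact (hmono0 j i h).trans (hinple i)
  have hdir : Directed (· ≤ ·) g := hmono.directed_le
  haveI hne : Nonempty lam.ord.ToType := by
    refine Ordinal.toType_nonempty_iff_ne_zero.2 ?_
    have h0 : (0 : Cardinal).ord < lam.ord := Cardinal.ord_lt_ord.2 hlam.pos
    rw [Cardinal.ord_zero] at h0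
    exact h0.ne'
  have hcard : ∀ i, #(g i) ≤ ν := by
    intro i
    refine WellFounded.induction (C := fun i => #(g i) ≤ ν) wellFounded_lt i ?_
    intro i IH
    · rw [hg' i]
      refine hφ₂ _ ((myMkSpanLe _ _ _).trans ?_)
      have hgen : #(X ∪ ⋃ j : {k : lam.ord.ToType // k < i}, (g j.1 : Set M) : Set M) ≤ ν := by
        refine (Cardinal.mk_union_le _ _).trans ?_
        have h2 : #(⋃ j : {k : lam.ord.ToType // k < i}, (g j.1 : Set M)) ≤ ν := by
          refine (Cardinal.mk_iUnion_le _).trans ?_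
          have hsub : #{k : lam.ord.ToType // k < i} ≤ lam := by
            refine le_trans (Cardinal.mk_subtype_le _) ?_
            rw [Cardinal.mk_toType, Cardinal.card_ord]
          calc #{k : lam.ord.ToType // k < i} * ⨆ j : {k : lam.ord.ToType // k < i}, #(g j.1 : Set M)
              ≤ lam * ν := mul_le_mul' hsub (ciSup_le' fun j => IH j.1 j.2)
            _ ≤ max (max lam ν) ℵ₀ := Cardinal.mul_le_max _ _
            _ ≤ ν := by simp [max_le_iff, hlamν, hν]
        calc #X + #(⋃ j : {k : lam.ord.ToType // k < i}, (g j.1 : Set M)) ≤ ν + ν :=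
              add_le_add hX h2
          _ = ν := Cardinal.add_eq_self hν
      have hRop : #(Rᵐᵒᵖ) = #R := Cardinal.mk_congr MulOpposite.opEquiv.symm
      simp only [max_le_iff]
      exact ⟨⟨hgen, by rw [hRop]; exact hRν⟩, hν⟩
  refine ⟨⨆ i, g i, ?_, ?_, ?_⟩
  · intro m hm
    obtain ⟨i₀⟩ := hne
    exact le_iSup g i₀ ((hinple i₀) (hXinp i₀ hm))
  · have hcoe : ((⨆ i, g i : Submodule Rᵐᵒᵖ M) : Set M) = ⋃ i, (g i : Set M) :=
      coe_iSup_of_directed g hdir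
    have e : #(⨆ i, g i : Submodule Rᵐᵒᵖ M) = #(⋃ i, (g i : Set M)) :=
      Cardinal.mk_congr (Equiv.setCongr hcoe)
    rw [e]
    refine (Cardinal.mk_iUnion_le _).trans ?_
    have hB : #(lam.ord.ToType) = lam := by rw [Cardinal.mk_toType, Cardinal.card_ord]
    calc #(lam.ord.ToType) * ⨆ i, #(g i : Set M) ≤ lam * ν :=
          mul_le_mul' hB.le (ciSup_le' hcard)
      _ ≤ max (max lam ν) ℵ₀ := Cardinal.mul_le_max _ _
      _ ≤ ν := by simp [max_le_iff, hlamν, hν]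
  · rintro V E hV hE coef param hparam ⟨y, hy⟩
    obtain ⟨ι⟩ : Nonempty (V ↪ T) := by
      rw [← Cardinal.le_def, hT]
      exact (hV.trans_le hlamν).le
    set S : Set ((T →₀ R) × M) := Set.range (fun e => ((coef e).embDomain ι, param e)) with hSdef
    have hScard : #S < lam := Cardinal.mk_range_le.trans_lt hE
    have hmemiSup : ∀ e, ∃ i, param e ∈ g i := fun e =>
      (mem_iSup_of_directed g hdir).1 (hparam e)
    choose idx hidx using hmemiSup
    obtain ⟨j, hj⟩ : ∃ j, ∀ e, idx e < j := by
      have hcof : (@Ordinal.type lam.ord.ToType (· < ·) isWellOrder_lt).cof = lam := by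
        rw [Ordinal.type_toType]
        exact hlam.cof_eq
      have hb : Set.Bounded (· < ·) (Set.range idx) := by
        by_contra hnb
        have hcf : IsCofinal (Set.range idx) := fun a => by
          by_contra h
          push_neg at h
          exact hnb ⟨a, fun b hb => h b hb⟩
        have hle := Order.cof_le hcf
        rw [Ordinal.cof_toType, hlam.cof_eq] at hle
        exact absurd (hle.trans_lt (Cardinal.mk_range_le.trans_lt hE)) (lt_irrefl _)
      obtain ⟨j, hjb⟩ := hb
      exact ⟨j, fun e => hjb _ (Set.mem_range_self e)⟩
    have hparam' : ∀ q ∈ S, q.2 ∈ inp j := by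
      rintro q ⟨e, rfl⟩
      exact hmono0 (idx e) j (hj e) (hidx e)
    have hsolM : ∃ x : T → M, ∀ q ∈ S, (q.1).sum (fun t r => MulOpposite.op r • x t) = q.2 := by
      refine ⟨Function.extend ι y 0, ?_⟩
      rintro q ⟨e, rfl⟩
      dsimp only
      rw [Finsupp.sum_embDomain, ← hy e]
      refine Finsupp.sum_congr ?_
      intro v _
      rw [ι.injective.extend_apply]
    obtain ⟨x, hxmem, hxeq⟩ := hφ₃ (inp j) S hScard hparam' hsolM
    refine ⟨fun v => x (ι v), fun v => ?_, fun e => ?_⟩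
    · have hm := hxmem (ι v)
      rw [← hg' j] at hm
      exact le_iSup g j hm
    · have h := hxeq ((coef e).embDomain ι, param e) ⟨e, rfl⟩
      rwa [Finsupp.sum_embDomain] at h
end

section
/- Let R be a ring, λ a regular cardinal, and S an R-module admitting an exact sequence P_2 → P_1 → P_0 → S → 0 with P_0, P_1, P_2 projective modules with fewer than λ generators each. Then for any λ-directed diagram (M_ξ) of right R-modules with colimit M, if Ext^1_R(S, M_ξ) = 0 for all ξ, then Ext^1_R(S, M) = 0; i.e., the class {S}^{⊥₁} is closed under λ-directed colimits. -/
set_option linter.unusedSectionVars false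

open CategoryTheory Limits Opposite

universe u

namespace ExtPerpAux

noncomputable section

variable {R : Type u} [Ring R]
variable {S P₀ P₁ P₂ : ModuleCat.{u} Rᵐᵒᵖ}
variable [Projective P₀] [Projective P₁] [Projective P₂]
variable (d₂ : P₂ ⟶ P₁) (d₁ : P₁ ⟶ P₀) (ε : P₀ ⟶ S)
variable (w : d₂ ≫ d₁ = 0)

lemma d_comp_f_aux (T : ShortComplex (ModuleCat.{u} Rᵐᵒᵖ)) : Projective.d T.f ≫ T.f = 0 :=
  (Category.assoc _ _ _).trans ((congrArg (fun k => Projective.π (kernel T.f) ≫ k)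
    (kernel.condition T.f)).trans Limits.comp_zero)

/-- Extend the given partial resolution to a full chain complex. -/
def resComplex : ChainComplex (ModuleCat.{u} Rᵐᵒᵖ) ℕ :=
  ChainComplex.mk P₀ P₁ P₂ d₁ d₂ w
    (fun T => ⟨Projective.syzygies T.f, Projective.d T.f, d_comp_f_aux T⟩)

lemma resComplex_d_1_0 : (resComplex d₂ d₁ w).d 1 0 = d₁ := by
  simp [resComplex]

lemma resComplex_d_2_1 : (resComplex d₂ d₁ w).d 2 1 = d₂ := by
  simp [resComplex]

instance resComplex_projective (n : ℕ) : Projective ((resComplex d₂ d₁ w).X n) := by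
  obtain (_ | _ | _ | n) := n
  · exact ‹Projective P₀›
  · exact ‹Projective P₁›
  · exact ‹Projective P₂›
  · apply Projective.projective_over

variable (hex₁ : LinearMap.range d₂.hom = LinearMap.ker d₁.hom)

include hex₁ in
lemma resComplex_exactAt_succ (n : ℕ) :
    (resComplex d₂ d₁ w).ExactAt (n + 1) := by
  rw [HomologicalComplex.exactAt_iff' _ (n + 1 + 1) (n + 1) n (by simp) (by simp)]
  dsimp [resComplex, HomologicalComplex.sc', HomologicalComplex.shortComplexFunctor',
      ChainComplex.mk]
  match n with
  | 0 => exact ShortComplex.Exact.moduleCat_of_range_eq_ker d₂ d₁ hex₁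
  | n + 1 =>
    refine ShortComplex.exact_of_iso ?_ (exact_d_f (ChainComplex.mkAux P₀ P₁ P₂ d₁ d₂ w
      (fun T => ⟨Projective.syzygies T.f, Projective.d T.f, d_comp_f_aux T⟩) n).f)
    refine ShortComplex.isoMk (Iso.refl _) (Iso.refl _) (Iso.refl _) ?_ ?_
    · exact (Category.id_comp _).trans
        ((ChainComplex.of_d
          (fun n => (ChainComplex.mkAux P₀ P₁ P₂ d₁ d₂ w
          (fun T => ⟨Projective.syzygies T.f, Projective.d T.f, d_comp_f_aux T⟩) n).X₃)
          (fun n => (ChainComplex.mkAux P₀ P₁ P₂ d₁ d₂ w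
          (fun T => ⟨Projective.syzygies T.f, Projective.d T.f, d_comp_f_aux T⟩) n).g)
          (n + 1 + 1)).trans (Category.comp_id _).symm)
    · exact (Category.id_comp _).trans
        ((ChainComplex.of_d
          (fun n => (ChainComplex.mkAux P₀ P₁ P₂ d₁ d₂ w
          (fun T => ⟨Projective.syzygies T.f, Projective.d T.f, d_comp_f_aux T⟩) n).X₃)
          (fun n => (ChainComplex.mkAux P₀ P₁ P₂ d₁ d₂ w
          (fun T => ⟨Projective.syzygies T.f, Projective.d T.f, d_comp_f_aux T⟩) n).g)
          (n + 1)).trans (Category.comp_id _).symm)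

variable (hex₀ : LinearMap.range d₁.hom = LinearMap.ker ε.hom)
variable (hsurj : Function.Surjective ε)

include hex₀ in
lemma res_d_comp_ε : (resComplex d₂ d₁ w).d 1 0 ≫ ε = 0 := by
  rw [resComplex_d_1_0]
  refine ModuleCat.hom_ext (LinearMap.ext ?_)
  intro x
  have : d₁.hom x ∈ LinearMap.ker ε.hom := hex₀ ▸ LinearMap.mem_range_self d₁.hom x
  exact this

include hex₁ hex₀ hsurj in
/-- The projective resolution of `S` built from the given data. -/
def resolution : ProjectiveResolution S where
  complex := resComplex d₂ d₁ w
  π := (ChainComplex.toSingle₀Equiv _ _).symm ⟨ε, res_d_comp_ε d₂ d₁ ε w hex₀⟩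
  quasiIso := ⟨fun n => by
    cases n with
    | zero =>
      rw [ChainComplex.quasiIsoAt₀_iff, ShortComplex.quasiIso_iff_of_zeros']
      · refine (ShortComplex.exact_and_epi_g_iff_of_iso ?_).2
          ⟨ShortComplex.Exact.moduleCat_of_range_eq_ker d₁ ε hex₀,
            (ModuleCat.epi_iff_surjective ε).2 hsurj⟩
        exact ShortComplex.isoMk (Iso.refl _) (Iso.refl _) (Iso.refl _)
          (by simp [resComplex]; exact (Category.id_comp _).trans (Category.comp_id _).symm)
          (by simp; exact (Category.id_comp _).trans
                ((ChainComplex.toSingle₀Equiv_symm_apply_f_zero (C := resComplex d₂ d₁ w) ε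
                  (res_d_comp_ε d₂ d₁ ε w hex₀)).symm.trans (Category.comp_id _).symm))
      all_goals rfl
    | succ n =>
      rw [quasiIsoAt_iff_exactAt']
      · exact resComplex_exactAt_succ d₂ d₁ w hex₁ n
      · apply ChainComplex.exactAt_succ_single_obj⟩


lemma subsingleton_iff_isZero {A : Type*} [Ring A] (M : ModuleCat A) :
    Subsingleton M ↔ IsZero M := by
  constructor
  · intro h
    exact ModuleCat.isZero_of_subsingleton M
  · intro h
    have hid : (𝟙 M : M ⟶ M) = 0 := h.eq_of_src _ _
    refine ⟨fun a b => ?_⟩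
    calc a = (𝟙 M : M ⟶ M) a := rfl
    _ = (0 : M ⟶ M) a := by rw [hid]
    _ = (𝟙 M : M ⟶ M) b := by rw [hid]; rfl
    _ = b := rfl

include w hex₁ hex₀ hsurj in
lemma subsingleton_ext_iff (N : ModuleCat.{u} Rᵐᵒᵖ) :
    Subsingleton (((Ext ℤ (ModuleCat.{u} Rᵐᵒᵖ) 1).obj (op S)).obj N) ↔
      ∀ f : P₁ ⟶ N, d₂ ≫ f = 0 → ∃ g : P₀ ⟶ N, d₁ ≫ g = f := by
  have e := (resolution d₂ d₁ ε w hex₁ hex₀ hsurj).isoExt (R := ℤ) 1 N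
  rw [subsingleton_iff_isZero]
  rw [show IsZero (((Ext ℤ (ModuleCat.{u} Rᵐᵒᵖ) 1).obj (op S)).obj N) ↔
      IsZero (((resComplex d₂ d₁ w).linearYonedaObj ℤ N).homology 1) from
    ⟨fun h => h.of_iso e.symm, fun h => h.of_iso e⟩]
  rw [← HomologicalComplex.exactAt_iff_isZero_homology]
  rw [HomologicalComplex.exactAt_iff' _ 0 1 2 (by simp) (by simp)]
  rw [ShortComplex.moduleCat_exact_iff]
  constructor
  · intro h f hf
    obtain ⟨g, hg⟩ := h f (by exact hf)
    exact ⟨g, by exact hg⟩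
  · intro h f hf
    obtain ⟨g, hg⟩ := h f (by exact hf)
    exact ⟨g, by exact hg⟩

end

end ExtPerpAux

open ExtPerpAux in
/-- **`{S}^{⊥₁}` is closed under `λ`-directed colimits.**
Let `R` be a ring, `λ` a regular cardinal, and `S` a right `R`-module admitting an exact
sequence `P₂ ⟶ P₁ ⟶ P₀ ⟶ S ⟶ 0` with `P₀, P₁, P₂` projective right `R`-modules with
fewer than `λ` generators each.  If `(M_ξ)` is a `λ`-directed diagram of right `R`-modules
with colimit `M` such that `Ext¹_R(S, M_ξ) = 0` for all `ξ`, then `Ext¹_R(S, M) = 0`.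
(Right `R`-modules are modules over `Rᵐᵒᵖ`.) -/
theorem ext_one_perp_closed_under_lambda_directed_colimits
    (R : Type u) [Ring R] (lam : Cardinal.{u}) (hlam : lam.IsRegular)
    (S : ModuleCat.{u} Rᵐᵒᵖ)
    (P₀ P₁ P₂ : ModuleCat.{u} Rᵐᵒᵖ)
    (hproj : Module.Projective Rᵐᵒᵖ P₀ ∧ Module.Projective Rᵐᵒᵖ P₁ ∧
      Module.Projective Rᵐᵒᵖ P₂)
    (hgen : ∀ P ∈ ({P₀, P₁, P₂} : Set (ModuleCat.{u} Rᵐᵒᵖ)),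
      ∃ G : Set P, Cardinal.mk G < lam ∧ Submodule.span Rᵐᵒᵖ G = ⊤)
    (d₂ : P₂ ⟶ P₁) (d₁ : P₁ ⟶ P₀) (ε : P₀ ⟶ S)
    (hex₁ : LinearMap.range d₂.hom = LinearMap.ker d₁.hom)
    (hex₀ : LinearMap.range d₁.hom = LinearMap.ker ε.hom)
    (hsurj : Function.Surjective ε)
    (Ξ : Type u) [PartialOrder Ξ]
    (hdir : ∀ s : Set Ξ, Cardinal.mk s < lam → ∃ b : Ξ, ∀ x ∈ s, x ≤ b)
    (G : Ξ ⥤ ModuleCat.{u} Rᵐᵒᵖ) (c : Cocone G) (hc : IsColimit c)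
    (hvan : ∀ ξ : Ξ,
      Subsingleton (((Ext ℤ (ModuleCat.{u} Rᵐᵒᵖ) 1).obj (op S)).obj (G.obj ξ))) :
    Subsingleton (((Ext ℤ (ModuleCat.{u} Rᵐᵒᵖ) 1).obj (op S)).obj c.pt) := by
  classical
  obtain ⟨hp0, hp1, hp2⟩ := hproj
  haveI hP0 : Projective P₀ :=
    Projective.of_iso (Iso.refl P₀) ((IsProjective.iff_projective P₀).mp hp0)
  haveI hP1 : Projective P₁ :=
    Projective.of_iso (Iso.refl P₁) ((IsProjective.iff_projective P₁).mp hp1)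
  haveI hP2 : Projective P₂ :=
    Projective.of_iso (Iso.refl P₂) ((IsProjective.iff_projective P₂).mp hp2)
  have w : d₂ ≫ d₁ = 0 := by
    refine ModuleCat.hom_ext (LinearMap.ext ?_)
    intro x
    have : d₂.hom x ∈ LinearMap.ker d₁.hom := hex₁ ▸ LinearMap.mem_range_self d₂.hom x
    simpa using this
  -- directedness facts
  have hfin : ∀ s : Set Ξ, s.Finite → ∃ b : Ξ, ∀ x ∈ s, x ≤ b := fun s hs =>
    hdir s (hs.lt_aleph0.trans_le hlam.aleph0_le)
  have hne : Nonempty Ξ := by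
    obtain ⟨b, -⟩ := hfin ∅ Set.finite_empty
    exact ⟨b⟩
  haveI : IsDirected Ξ (· ≤ ·) := ⟨fun a b => by
    obtain ⟨e, he⟩ := hfin {a, b} ((Set.finite_singleton b).insert a)
    exact ⟨e, he a (by simp), he b (by simp)⟩⟩
  haveI : IsFiltered Ξ := inferInstance
  -- reduce Ext vanishing to a factorization property
  rw [subsingleton_ext_iff d₂ d₁ ε w hex₁ hex₀ hsurj]
  have hvan' : ∀ (ξ : Ξ) (f : P₁ ⟶ G.obj ξ), d₂ ≫ f = 0 → ∃ g : P₀ ⟶ G.obj ξ, d₁ ≫ g = f :=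
    fun ξ => (subsingleton_ext_iff d₂ d₁ ε w hex₁ hex₀ hsurj (G.obj ξ)).mp (hvan ξ)
  intro f hf
  -- Step 1: factor `f` through some stage `ξ₀`.
  obtain ⟨Gen₁, hG1card, hG1span⟩ := hgen P₁ (by simp)
  obtain ⟨Gen₂, hG2card, hG2span⟩ := hgen P₂ (by simp)
  have hrep : ∀ x : Gen₁, ∃ (j : Ξ) (z : G.obj j), c.ι.app j z = f (x : P₁) := fun x =>
    Concrete.isColimit_exists_rep G hc (f (x : P₁))
  choose j z hz using hrep
  obtain ⟨ξ₀, hξ₀⟩ := hdir (Set.range j) (Cardinal.mk_range_le.trans_lt hG1card)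
  set u : Gen₁ → G.obj ξ₀ := fun x => G.map (homOfLE (hξ₀ _ ⟨x, rfl⟩)) (z x) with hu
  set h₁ : (Gen₁ →₀ Rᵐᵒᵖ) →ₗ[Rᵐᵒᵖ] G.obj ξ₀ := Finsupp.linearCombination Rᵐᵒᵖ u with hh₁
  set π₁ : (Gen₁ →₀ Rᵐᵒᵖ) →ₗ[Rᵐᵒᵖ] P₁ :=
    Finsupp.linearCombination Rᵐᵒᵖ (fun x : Gen₁ => (x : P₁)) with hπ₁
  have hπ₁surj : Function.Surjective π₁ := by
    rw [← LinearMap.range_eq_top, hπ₁, Finsupp.range_linearCombination, Subtype.range_coe,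
      hG1span]
  obtain ⟨σ, hσ⟩ := Module.projective_lifting_property (h := hp1) π₁ LinearMap.id hπ₁surj
  have hcomm : ∀ q : Gen₁ →₀ Rᵐᵒᵖ, c.ι.app ξ₀ (h₁ q) = f (π₁ q) := by
    have heq : (c.ι.app ξ₀).hom.comp h₁
        = f.hom.comp π₁ := by
      apply Finsupp.lhom_ext
      intro a b
      have h1 : h₁ (Finsupp.single a b) = b • u a := by
        rw [hh₁]; exact Finsupp.linearCombination_single _ _ _
      have h2 : π₁ (Finsupp.single a b) = b • (a : P₁) := by
        rw [hπ₁]; exact Finsupp.linearCombination_single _ _ _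
      have h3 : c.ι.app ξ₀ (u a) = f (a : P₁) := by
        calc c.ι.app ξ₀ (u a)
            = (G.map (homOfLE (hξ₀ _ ⟨a, rfl⟩)) ≫ c.ι.app ξ₀) (z a) := rfl
        _ = c.ι.app (j a) (z a) := by rw [c.w]
        _ = f (a : P₁) := by exact hz a
      calc ((c.ι.app ξ₀).hom.comp h₁) (Finsupp.single a b)
          = c.ι.app ξ₀ (h₁ (Finsupp.single a b)) := rfl
      _ = b • c.ι.app ξ₀ (u a) := by rw [h1, map_smul]
      _ = b • f (a : P₁) := by rw [h3]
      _ = f (b • (a : P₁)) := by rw [map_smul]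
      _ = (f.hom.comp π₁) (Finsupp.single a b) := by rw [← h2]; rfl
    intro q
    exact LinearMap.congr_fun heq q
  set g₀ : P₁ ⟶ G.obj ξ₀ := ModuleCat.ofHom (h₁.comp σ) with hg₀
  have hfact : g₀ ≫ c.ι.app ξ₀ = f := by
    refine ModuleCat.hom_ext (LinearMap.ext ?_)
    intro p
    have h1 : (g₀ ≫ c.ι.app ξ₀) p = c.ι.app ξ₀ (h₁ (σ p)) := rfl
    rw [h1, hcomm (σ p)]
    have : π₁ (σ p) = p := LinearMap.congr_fun hσ p
    rw [this]
  -- Step 2: kill `d₂ ≫ g₀` at a later stage `ξ₁`.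
  have hzero : ∀ x : Gen₂, c.ι.app ξ₀ ((d₂ ≫ g₀) (x : P₂)) = 0 := by
    intro x
    have h2 : (d₂ ≫ g₀ ≫ c.ι.app ξ₀) (x : P₂) = ((d₂ ≫ f) : P₂ ⟶ c.pt) (x : P₂) := by
      rw [hfact]
    rw [hf] at h2
    have h3 : ((0 : P₂ ⟶ c.pt)) (x : P₂) = 0 := rfl
    exact h2.trans h3
  have hkillx : ∀ x : Gen₂, ∃ (k : Ξ) (hk : ξ₀ ≤ k),
      G.map (homOfLE hk) ((d₂ ≫ g₀) (x : P₂)) = 0 := by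
    intro x
    have h0 : c.ι.app ξ₀ ((d₂ ≫ g₀) (x : P₂)) = c.ι.app ξ₀ (0 : G.obj ξ₀) := by
      rw [hzero x, map_zero]
    obtain ⟨k, f1, g1, hk⟩ := Concrete.isColimit_exists_of_rep_eq G hc _ _ h0
    refine ⟨k, f1.le, ?_⟩
    have hz0 : (G.map g1) (0 : G.obj ξ₀) = 0 := map_zero _
    have h4 : G.map f1 ((d₂ ≫ g₀) (x : P₂)) = 0 := by exact hk.trans hz0
    rw [show (homOfLE f1.le : ξ₀ ⟶ k) = f1 from Subsingleton.elim _ _]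
    exact h4
  choose k hk hkspec using hkillx
  obtain ⟨ξ₁', hξ₁'⟩ := hdir (Set.range k) (Cardinal.mk_range_le.trans_lt hG2card)
  obtain ⟨ξ₁, hξ₁⟩ := hfin {ξ₀, ξ₁'} ((Set.finite_singleton _).insert _)
  have h01 : ξ₀ ≤ ξ₁ := hξ₁ ξ₀ (by simp)
  have h1'1 : ξ₁' ≤ ξ₁ := hξ₁ ξ₁' (by simp)
  have hkill : ∀ p : P₂, G.map (homOfLE h01) ((d₂ ≫ g₀) p) = 0 := by
    have hmem : ∀ p : P₂, p ∈ Submodule.span Rᵐᵒᵖ Gen₂ := by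
      rw [hG2span]; intro p; trivial
    intro p
    induction hmem p using Submodule.span_induction with
    | mem x hx =>
      have hkx : k ⟨x, hx⟩ ≤ ξ₁ := (hξ₁' _ ⟨⟨x, hx⟩, rfl⟩).trans h1'1
      have : (homOfLE h01 : ξ₀ ⟶ ξ₁) = homOfLE (hk ⟨x, hx⟩) ≫ homOfLE hkx :=
        Subsingleton.elim _ _
      rw [this, G.map_comp]
      have h3 : (G.map (homOfLE (hk ⟨x, hx⟩)) ≫ G.map (homOfLE hkx))
          ((d₂ ≫ g₀) x) = G.map (homOfLE hkx)
            (G.map (homOfLE (hk ⟨x, hx⟩)) ((d₂ ≫ g₀) x)) := rfl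
      rw [h3, hkspec ⟨x, hx⟩, map_zero]
    | zero => simp
    | add a b _ _ ha hb => rw [map_add, map_add, ha, hb, add_zero]
    | smul r a _ ha => rw [map_smul, map_smul, ha, smul_zero]
  -- Step 3: use vanishing at `ξ₁`.
  obtain ⟨g, hg⟩ := hvan' ξ₁ (g₀ ≫ G.map (homOfLE h01)) (by
    refine ModuleCat.hom_ext (LinearMap.ext ?_)
    intro p
    exact hkill p)
  refine ⟨g ≫ c.ι.app ξ₁, ?_⟩
  rw [← Category.assoc, hg, Category.assoc, c.w (homOfLE h01)]
  exact hfact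
end

section
/- Let λ be a regular cardinal and R a ring such that every right ideal of R is generated by fewer than λ elements. Then the class of injective right R-modules is closed under λ-directed colimits in the category of right R-modules. -/
open CategoryTheory Limits

universe u

lemma aux_span_lt {A : Type u} [Ring A]
    (lam : Cardinal.{u}) (hlam : lam.IsRegular)
    (hA : ∀ I : Ideal A, ∃ G : Set A, Cardinal.mk G < lam ∧ Submodule.span A G = I)
    (α : Type u) (hα : Cardinal.mk α < lam) (N : Submodule A (α →₀ A)) :
    ∃ S : Set (α →₀ A), Cardinal.mk S < lam ∧ S ⊆ (N : Set (α →₀ A)) ∧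
      Submodule.span A S = N := by
  classical
  letI : LinearOrder α := IsWellOrder.linearOrder WellOrderingRel
  haveI : WellFoundedLT α := ⟨IsWellFounded.wf (r := WellOrderingRel (α := α))⟩
  set M : α → Submodule A (α →₀ A) :=
    fun a => N ⊓ Finsupp.supported A A (Set.Iic a) with hM
  set I : α → Ideal A := fun a => (M a).map (Finsupp.lapply a) with hI
  choose G hGcard hGspan using fun a => hA (I a)
  have hpre : ∀ (a : α) (x : A), x ∈ G a →
      ∃ y, y ∈ M a ∧ (Finsupp.lapply a : (α →₀ A) →ₗ[A] A) y = x := by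
    intro a x hx
    have hxI : x ∈ I a := (hGspan a) ▸ Submodule.subset_span hx
    obtain ⟨y, hy, hyx⟩ := hxI
    exact ⟨y, hy, hyx⟩
  choose p hpM hpev using hpre
  set q : α → A → (α →₀ A) := fun a x => if hx : x ∈ G a then p a x hx else 0 with hq
  have hqM : ∀ a x, x ∈ G a → q a x ∈ M a := fun a x hx => by
    simp only [hq, dif_pos hx]; exact hpM a x hx
  have hqev : ∀ a x, x ∈ G a → (q a x) a = x := fun a x hx => by
    simp only [hq, dif_pos hx]; exact hpev a x hx
  set S : Set (α →₀ A) := ⋃ a : α, Set.range (fun x : G a => q a x) with hS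
  have hScard : Cardinal.mk S < lam := by
    refine lt_of_le_of_lt Cardinal.mk_iUnion_le_sum_mk ?_
    exact Cardinal.sum_lt_of_isRegular hlam hα
      (fun a => lt_of_le_of_lt Cardinal.mk_range_le (hGcard a))
  have hSsub : S ⊆ (N : Set (α →₀ A)) := by
    rintro y hy
    simp only [hS, Set.mem_iUnion, Set.mem_range] at hy
    obtain ⟨a, x, rfl⟩ := hy
    exact (hqM a x x.2).1
  refine ⟨S, hScard, hSsub, le_antisymm (Submodule.span_le.2 hSsub) ?_⟩
  have key : ∀ a : α, ∀ n ∈ N, (↑n.support ⊆ Set.Iic a) → n ∈ Submodule.span A S := by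
    intro a
    induction a using WellFoundedLT.induction with
    | _ a IH =>
      intro n hnN hsupp
      have hnM : n ∈ M a := ⟨hnN, (Finsupp.mem_supported A n).2 hsupp⟩
      have hev : n a ∈ I a := ⟨n, hnM, by simp [Finsupp.lapply_apply]⟩
      rw [← hGspan a] at hev
      obtain ⟨cf, hcf, hsum⟩ := Submodule.mem_span_set.1 hev
      set m : α →₀ A := cf.sum (fun x r => r • q a x) with hm
      have hmS : m ∈ Submodule.span A S := by
        refine Submodule.sum_mem _ (fun x hx => Submodule.smul_mem _ _ (Submodule.subset_span ?_))
        exact Set.mem_iUnion.2 ⟨a, ⟨⟨x, hcf hx⟩, rfl⟩⟩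
      have hmM : m ∈ M a :=
        Submodule.sum_mem _ (fun x hx => Submodule.smul_mem _ _ (hqM a x (hcf hx)))
      have hma : m a = n a := by
        rw [hm, Finsupp.sum_apply, ← hsum]
        refine Finset.sum_congr rfl (fun x hx => ?_)
        dsimp only
        rw [Finsupp.smul_apply, hqev a x (hcf hx)]
      set n' : α →₀ A := n - m with hn'
      have hn'N : n' ∈ N := N.sub_mem hnN hmM.1
      have hn'supp : ↑n'.support ⊆ Set.Iic a := by
        intro b hb
        have hb' := Finsupp.support_sub (f := n) (g := m) hb
        rcases Finset.mem_union.1 hb' with h | h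
        · exact hsupp h
        · exact (Finsupp.mem_supported A m).1 hmM.2 h
      have hn'a : n' a = 0 := by simp [hn', Finsupp.sub_apply, hma]
      by_cases h0 : n' = 0
      · have hnm : n = m := by rwa [hn', sub_eq_zero] at h0
        rwa [hnm]
      · set b := n'.support.max' (Finsupp.support_nonempty_iff.2 h0) with hb
        have hbmem : b ∈ n'.support := Finset.max'_mem _ _
        have hba : b < a := lt_of_le_of_ne (hn'supp hbmem)
          (fun hEq => (Finsupp.mem_support_iff.1 hbmem) (hEq ▸ hn'a))
        have hn'span : n' ∈ Submodule.span A S :=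
          IH b hba n' hn'N (fun x hx => Finset.le_max' _ x hx)
        have hnm : n = m + n' := by rw [hn']; abel
        rw [hnm]
        exact Submodule.add_mem _ hmS hn'span
  intro n hn
  by_cases h0 : n = 0
  · simp [h0]
  · exact key (n.support.max' (Finsupp.support_nonempty_iff.2 h0)) n hn
      (fun x hx => Finset.le_max' _ x hx)

/-- **Injective modules are closed under `λ`-directed colimits.**
Let `λ` be a regular cardinal and `R` a ring in which every right ideal is generated by
fewer than `λ` elements.  Then the colimit of any `λ`-directed diagram of injective right
`R`-modules is injective.  (Right `R`-modules are modules over the opposite ring `Rᵐᵒᵖ`;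
a right ideal of `R` is a submodule of `R` viewed as a right module over itself.) -/
theorem injective_closed_under_lambda_directed_colimits
    (lam : Cardinal.{u}) (hlam : lam.IsRegular)
    (R : Type u) [Ring R]
    (hR : ∀ I : Submodule Rᵐᵒᵖ R, ∃ G : Set R, Cardinal.mk G < lam ∧ Submodule.span Rᵐᵒᵖ G = I)
    (Ξ : Type u) [PartialOrder Ξ]
    (hdir : ∀ s : Set Ξ, Cardinal.mk s < lam → ∃ b : Ξ, ∀ x ∈ s, x ≤ b)
    (F : Ξ ⥤ ModuleCat.{u} Rᵐᵒᵖ)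
    (hinj : ∀ ξ : Ξ, Module.Injective Rᵐᵒᵖ (F.obj ξ))
    (c : Cocone F) (hc : IsColimit c) :
    Module.Injective Rᵐᵒᵖ c.pt := by
  classical
  -- Ξ is a nonempty directed poset, hence filtered
  haveI : Nonempty Ξ := by
    obtain ⟨b, -⟩ := hdir ∅ (by
      rw [Cardinal.mk_emptyCollection]
      exact Cardinal.aleph0_pos.trans_le hlam.aleph0_le)
    exact ⟨b⟩
  haveI : IsDirected Ξ (· ≤ ·) := ⟨fun x y => by
    obtain ⟨b, hb⟩ := hdir {x, y} ((Set.toFinite _).lt_aleph0.trans_le hlam.aleph0_le)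
    exact ⟨b, hb x (by simp), hb y (by simp)⟩⟩
  -- transfer the generation hypothesis to ideals of Rᵐᵒᵖ
  let e : R ≃ₗ[Rᵐᵒᵖ] Rᵐᵒᵖ :=
    { toFun := MulOpposite.op
      invFun := MulOpposite.unop
      left_inv := fun _ => rfl
      right_inv := fun _ => rfl
      map_add' := fun _ _ => rfl
      map_smul' := fun _ _ => rfl }
  have hA : ∀ I : Ideal Rᵐᵒᵖ, ∃ G : Set Rᵐᵒᵖ, Cardinal.mk G < lam ∧
      Submodule.span Rᵐᵒᵖ G = I := by
    intro I
    obtain ⟨G, hG1, hG2⟩ := hR (Submodule.map (e.symm : Rᵐᵒᵖ →ₗ[Rᵐᵒᵖ] R) I)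
    refine ⟨(e : R →ₗ[Rᵐᵒᵖ] Rᵐᵒᵖ) '' G, lt_of_le_of_lt Cardinal.mk_image_le hG1, ?_⟩
    rw [← Submodule.map_span, hG2]
    exact (Submodule.map_symm_eq_iff e).mp rfl
  -- basic colimit facts
  have rep : ∀ x : c.pt, ∃ (ξ : Ξ) (y : F.obj ξ), c.ι.app ξ y = x := fun x =>
    Concrete.isColimit_exists_rep F hc x
  have vanish : ∀ (ξ : Ξ) (y : F.obj ξ), c.ι.app ξ y = 0 →
      ∃ (ξ' : Ξ) (h : ξ ≤ ξ'), F.map (homOfLE h) y = 0 := by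
    intro ξ y hy
    have h0 : c.ι.app ξ y = c.ι.app ξ (0 : F.obj ξ) := by rw [hy, map_zero]
    obtain ⟨k, f1, g1, hk⟩ := Concrete.isColimit_exists_of_rep_eq F hc y 0 h0
    refine ⟨k, leOfHom f1, ?_⟩
    have hk' : F.map f1 y = F.map g1 0 := hk
    rw [show homOfLE (leOfHom f1) = f1 from rfl, hk', map_zero]
  -- Baer's criterion
  refine Module.Baer.injective (fun I f => ?_)
  obtain ⟨G, hGcard, hGspan⟩ := hA I
  have memI : ∀ g : G, (g : Rᵐᵒᵖ) ∈ I := fun g => hGspan ▸ Submodule.subset_span g.2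
  let T : (G →₀ Rᵐᵒᵖ) →ₗ[Rᵐᵒᵖ] Rᵐᵒᵖ :=
    Finsupp.linearCombination Rᵐᵒᵖ (Subtype.val : G → Rᵐᵒᵖ)
  have hTmem : ∀ u, T u ∈ I := by
    intro u
    have : T u ∈ LinearMap.range T := LinearMap.mem_range_self T u
    rwa [Finsupp.range_linearCombination, Subtype.range_coe, hGspan] at this
  let T' : (G →₀ Rᵐᵒᵖ) →ₗ[Rᵐᵒᵖ] I := T.codRestrict I hTmem
  have hT'surj : Function.Surjective T' := by
    rintro ⟨x, hx⟩
    have : x ∈ LinearMap.range T := by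
      rwa [Finsupp.range_linearCombination, Subtype.range_coe, hGspan]
    obtain ⟨u, hu⟩ := this
    exact ⟨u, Subtype.ext hu⟩
  obtain ⟨S, hScard, hSsub, hSspan⟩ := aux_span_lt lam hlam hA G hGcard (LinearMap.ker T)
  -- choose representatives of the images of the generators
  choose ξg yg hyg using fun g : G => rep (f ⟨g, memI g⟩)
  obtain ⟨ξ₀, hξ₀⟩ := hdir (Set.range ξg) (lt_of_le_of_lt Cardinal.mk_range_le hGcard)
  let z : G → F.obj ξ₀ := fun g => F.map (homOfLE (hξ₀ _ ⟨g, rfl⟩)) (yg g)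
  have hz : ∀ g : G, c.ι.app ξ₀ (z g) = f ⟨g, memI g⟩ := by
    intro g
    have hw := c.w (homOfLE (hξ₀ (ξg g) ⟨g, rfl⟩))
    calc c.ι.app ξ₀ (z g) = (F.map (homOfLE (hξ₀ (ξg g) ⟨g, rfl⟩)) ≫ c.ι.app ξ₀) (yg g) := rfl
      _ = c.ι.app (ξg g) (yg g) := ConcreteCategory.congr_hom hw (yg g)
      _ = f ⟨g, memI g⟩ := hyg g
  let φ : (G →₀ Rᵐᵒᵖ) →ₗ[Rᵐᵒᵖ] F.obj ξ₀ := Finsupp.linearCombination Rᵐᵒᵖ z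
  have hφ : LinearMap.comp (c.ι.app ξ₀).hom φ = f.comp T' := by
    apply Finsupp.lhom_ext
    intro g a
    have h1 : φ (Finsupp.single g a) = a • z g := Finsupp.linearCombination_single _ _ _
    have h2 : T' (Finsupp.single g a) = a • (⟨g, memI g⟩ : I) := by
      apply Subtype.ext
      show T (Finsupp.single g a) = a • (g : Rᵐᵒᵖ)
      exact Finsupp.linearCombination_single _ _ _
    show c.ι.app ξ₀ (φ (Finsupp.single g a)) = f (T' (Finsupp.single g a))
    rw [h1, h2, map_smul, map_smul, hz]
  have hφ' : ∀ u, c.ι.app ξ₀ (φ u) = f (T' u) := fun u => DFunLike.congr_fun hφ u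
  -- kill the relations at a later stage
  have hker : ∀ s : S, c.ι.app ξ₀ (φ s) = 0 := by
    intro s
    have hsK : (s : G →₀ Rᵐᵒᵖ) ∈ LinearMap.ker T := hSsub s.2
    have hT's : T' s = 0 := Subtype.ext (show T (s : ↑G →₀ Rᵐᵒᵖ) = 0 by simpa using hsK)
    rw [hφ' s, hT's, map_zero]
  choose ξs hξs hvan using fun s : S => vanish ξ₀ (φ s) (hker s)
  obtain ⟨ξ₁, hξ₁⟩ := hdir (Set.range ξs ∪ {ξ₀}) (by
    refine lt_of_le_of_lt (Cardinal.mk_union_le _ _) ?_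
    refine Cardinal.add_lt_of_lt hlam.aleph0_le
      (lt_of_le_of_lt Cardinal.mk_range_le hScard) ?_
    rw [Cardinal.mk_singleton]
    exact Cardinal.one_lt_aleph0.trans_le hlam.aleph0_le)
  have hξ₀₁ : ξ₀ ≤ ξ₁ := hξ₁ ξ₀ (Or.inr rfl)
  let ψ : (G →₀ Rᵐᵒᵖ) →ₗ[Rᵐᵒᵖ] F.obj ξ₁ :=
    LinearMap.comp (F.map (homOfLE hξ₀₁)).hom φ
  have hψι : ∀ u, c.ι.app ξ₁ (ψ u) = f (T' u) := by
    intro u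
    have hw := c.w (homOfLE hξ₀₁)
    calc c.ι.app ξ₁ (ψ u) = (F.map (homOfLE hξ₀₁) ≫ c.ι.app ξ₁) (φ u) := rfl
      _ = c.ι.app ξ₀ (φ u) := ConcreteCategory.congr_hom hw (φ u)
      _ = f (T' u) := hφ' u
  have hψker : LinearMap.ker T ≤ LinearMap.ker ψ := by
    rw [← hSspan, Submodule.span_le]
    intro s hs
    have hcomp : homOfLE hξ₀₁ = homOfLE (hξs ⟨s, hs⟩) ≫
        homOfLE (hξ₁ (ξs ⟨s, hs⟩) (Or.inl ⟨⟨s, hs⟩, rfl⟩)) := rfl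
    show ψ s = 0
    show F.map (homOfLE hξ₀₁) (φ s) = 0
    rw [hcomp, F.map_comp]
    show (F.map (homOfLE (hξ₁ (ξs ⟨s, hs⟩) (Or.inl ⟨⟨s, hs⟩, rfl⟩))))
      ((F.map (homOfLE (hξs ⟨s, hs⟩))) (φ s)) = 0
    rw [hvan ⟨s, hs⟩, map_zero]
  -- factor through I
  have hkerT' : LinearMap.ker T' = LinearMap.ker T := LinearMap.ker_codRestrict I T hTmem
  let eqv : ((G →₀ Rᵐᵒᵖ) ⧸ LinearMap.ker T') ≃ₗ[Rᵐᵒᵖ] I :=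
    LinearMap.quotKerEquivOfSurjective T' hT'surj
  let h : I →ₗ[Rᵐᵒᵖ] F.obj ξ₁ :=
    (Submodule.liftQ (LinearMap.ker T') ψ (hkerT' ▸ hψker)).comp (eqv.symm : I →ₗ[Rᵐᵒᵖ] _)
  have hh : ∀ u, h (T' u) = ψ u := by
    intro u
    have h1 : eqv (Submodule.Quotient.mk u) = T' u := rfl
    have h2 : eqv.symm (T' u) = Submodule.Quotient.mk u := by
      rw [LinearEquiv.symm_apply_eq, h1]
    show Submodule.liftQ (LinearMap.ker T') ψ (hkerT' ▸ hψker) (eqv.symm (T' u)) = ψ u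
    rw [h2, Submodule.liftQ_apply]
  -- extend using injectivity of F.obj ξ₁
  obtain ⟨H, hH⟩ := (hinj ξ₁).out I.subtype Subtype.coe_injective h
  refine ⟨LinearMap.comp (c.ι.app ξ₁).hom H, fun x hx => ?_⟩
  obtain ⟨u, hu⟩ := hT'surj ⟨x, hx⟩
  calc (c.ι.app ξ₁) (H x) = c.ι.app ξ₁ (h ⟨x, hx⟩) := by
        rw [show H x = h ⟨x, hx⟩ from hH ⟨x, hx⟩]
    _ = c.ι.app ξ₁ (h (T' u)) := by rw [hu]
    _ = c.ι.app ξ₁ (ψ u) := by rw [hh]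
    _ = f (T' u) := hψι u
    _ = f ⟨x, hx⟩ := by rw [hu]
end

section
/- Let R be a left Noetherian ring. Then every injective left R-module is a direct sum of indecomposable injective left R-modules, and each indecomposable injective left R-module is the injective envelope of a cyclic module R/I for some left ideal I ⊆ R; consequently there is, up to isomorphism, only a set of indecomposable injective left R-modules, each of cardinality at most |R| + ℵ₀. -/
open CategoryTheory

universe u

/-- A module is indecomposable if it is nonzero and is not the (internal) direct sum of two
nonzero submodules. -/
def IsIndecomposableModule (R : Type u) [Ring R] (M : Type u) [AddCommGroup M]
    [Module R M] : Prop :=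
  Nontrivial M ∧ ∀ N P : Submodule R M, IsCompl N P → N = ⊥ ∨ P = ⊥

/-- A submodule `N ⊆ M` is essential if it intersects every nonzero submodule
nontrivially. -/
def IsEssentialSubmodule {R : Type u} [Ring R] {M : Type u} [AddCommGroup M] [Module R M]
    (N : Submodule R M) : Prop :=
  ∀ P : Submodule R M, P ≠ ⊥ → N ⊓ P ≠ ⊥

namespace MatlisAuxB

variable {R : Type u} [Ring R] {M : Type u} [AddCommGroup M] [Module R M]

def EssIn (N Y : Submodule R M) : Prop :=
  N ≤ Y ∧ ∀ P ≤ Y, P ≠ ⊥ → N ⊓ P ≠ ⊥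

theorem essIn_refl (N : Submodule R M) : EssIn N N := by
  refine ⟨le_rfl, fun P hP hPne => ?_⟩
  rw [inf_eq_right.mpr hP] at *
  exact hPne

theorem EssIn.trans {N X Y : Submodule R M} (h1 : EssIn N X) (h2 : EssIn X Y) : EssIn N Y := by
  refine ⟨h1.1.trans h2.1, fun P hP hPne => ?_⟩
  have hXP : X ⊓ P ≠ ⊥ := h2.2 P hP hPne
  have := h1.2 (X ⊓ P) inf_le_left hXP
  intro hb
  exact this (le_bot_iff.mp (hb ▸ inf_le_inf_left N inf_le_right))

/-- Zorn: maximal essential extension of `N` exists. -/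
theorem exists_maximal_essIn (N : Submodule R M) :
    ∃ X : Submodule R M, EssIn N X ∧ ∀ Y, EssIn N Y → X ≤ Y → Y = X := by
  have ih : ∀ c ⊆ {Y : Submodule R M | EssIn N Y}, IsChain (· ≤ ·) c → ∀ Y ∈ c,
      ∃ ub ∈ {Y : Submodule R M | EssIn N Y}, ∀ z ∈ c, z ≤ ub := by
    intro c hc hchain Y hY
    refine ⟨sSup c, ⟨le_trans (hc hY).1 (le_sSup hY), fun P hP hPne => ?_⟩, fun z hz => le_sSup hz⟩
    obtain ⟨p, hpP, hp0⟩ := (Submodule.ne_bot_iff P).mp hPne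
    have hpc : (p : M) ∈ sSup c := hP hpP
    obtain ⟨Z, hZc, hpZ⟩ := (Submodule.mem_sSup_of_directed ⟨Y, hY⟩ hchain.directedOn).mp hpc
    have : N ⊓ (P ⊓ Z) ≠ ⊥ := (hc hZc).2 (P ⊓ Z) inf_le_right
      ((Submodule.ne_bot_iff _).mpr ⟨p, ⟨hpP, hpZ⟩, hp0⟩)
    intro hb
    exact this (le_bot_iff.mp (hb ▸ inf_le_inf_left N inf_le_left))
  obtain ⟨X, _, hX⟩ := zorn_le_nonempty₀ {Y : Submodule R M | EssIn N Y} ih N (essIn_refl N)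
  exact ⟨X, hX.1, fun Y hY hXY => (hX.2 hY hXY).antisymm hXY⟩

/-- Zorn: maximal disjoint complement exists. -/
theorem exists_maximal_disjoint (X : Submodule R M) :
    ∃ C : Submodule R M, X ⊓ C = ⊥ ∧ ∀ C', X ⊓ C' = ⊥ → C ≤ C' → C' = C := by
  have ih : ∀ c ⊆ {C : Submodule R M | X ⊓ C = ⊥}, IsChain (· ≤ ·) c → ∀ Y ∈ c,
      ∃ ub ∈ {C : Submodule R M | X ⊓ C = ⊥}, ∀ z ∈ c, z ≤ ub := by
    intro c hc hchain Y hY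
    refine ⟨sSup c, ?_, fun z hz => le_sSup hz⟩
    show X ⊓ sSup c = ⊥
    rw [Submodule.eq_bot_iff]
    rintro z ⟨hzX, hzS⟩
    obtain ⟨Z, hZc, hpZ⟩ := (Submodule.mem_sSup_of_directed ⟨Y, hY⟩ hchain.directedOn).mp hzS
    have : X ⊓ Z = ⊥ := hc hZc
    rw [Submodule.eq_bot_iff] at this
    exact this z ⟨hzX, hpZ⟩
  obtain ⟨C, _, hC⟩ := zorn_le_nonempty₀ {C : Submodule R M | X ⊓ C = ⊥} ih ⊥ (by simp)
  exact ⟨C, hC.1, fun C' h1 h2 => (hC.2 h1 h2).antisymm h2⟩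

/-- If `C` is maximal among submodules disjoint from `X`, the image of `X` in `M ⧸ C`
is essential. -/
theorem quot_essential {X C : Submodule R M} (hdisj : X ⊓ C = ⊥)
    (hmax : ∀ C', X ⊓ C' = ⊥ → C ≤ C' → C' = C) :
    ∀ P : Submodule R (M ⧸ C), P ≠ ⊥ → X.map C.mkQ ⊓ P ≠ ⊥ := by
  intro P hP
  set Q := P.comap C.mkQ with hQ
  have hCQ : C ≤ Q := fun c hc => by
    show C.mkQ c ∈ P
    rw [Submodule.mkQ_apply, (Submodule.Quotient.mk_eq_zero C).mpr hc]
    exact P.zero_mem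
  have hQne : Q ≠ C := by
    intro h
    apply hP
    have : P = Q.map C.mkQ := by
      rw [hQ, Submodule.map_comap_eq_of_surjective (Submodule.mkQ_surjective C)]
    rw [this, h]
    rw [Submodule.eq_bot_iff]
    rintro z ⟨c, hc, rfl⟩
    exact (Submodule.Quotient.mk_eq_zero C).mpr hc
  have hXQ : X ⊓ Q ≠ ⊥ := by
    intro h
    exact hQne (hmax Q h hCQ)
  obtain ⟨z, ⟨hzX, hzQ⟩, hz0⟩ := (Submodule.ne_bot_iff _).mp hXQ
  rw [Submodule.ne_bot_iff]
  refine ⟨C.mkQ z, ⟨Submodule.mem_map_of_mem hzX, hzQ⟩, ?_⟩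
  intro h
  rw [Submodule.mkQ_apply, Submodule.Quotient.mk_eq_zero] at h
  apply hz0
  have : z ∈ X ⊓ C := ⟨hzX, h⟩
  rwa [hdisj, Submodule.mem_bot] at this

/-- A maximal essential extension inside an injective module is a direct summand. -/
theorem summand_of_max_ess (inj : Module.Injective R M) {E X : Submodule R M}
    (hX : EssIn E X) (hmax : ∀ Y, EssIn E Y → X ≤ Y → Y = X) :
    ∃ C, IsCompl X C := by
  classical
  obtain ⟨C, hdisj, hCmax⟩ := exists_maximal_disjoint X
  set π := C.mkQ with hπ
  set A := X.map C.mkQ with hA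
  have hAess := quot_essential hdisj hCmax
  set πX : X →ₗ[R] M ⧸ C := π.comp X.subtype with hπX
  have hπXinj : Function.Injective πX := by
    rw [← LinearMap.ker_eq_bot, Submodule.eq_bot_iff]
    intro y hy
    have h1 : πX y = 0 := hy
    have h2 : (y : M) ∈ C := by
      rw [hπX] at h1
      exact (Submodule.Quotient.mk_eq_zero C).mp h1
    have h3 : (y : M) ∈ X ⊓ C := ⟨y.2, h2⟩
    rw [hdisj, Submodule.mem_bot] at h3
    exact Subtype.ext h3
  have hrange : LinearMap.range πX = A := by
    rw [hπX, LinearMap.range_comp, Submodule.range_subtype]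
  let e : X ≃ₗ[R] A := (LinearEquiv.ofInjective πX hπXinj).trans (LinearEquiv.ofEq _ _ hrange)
  have he : ∀ x : X, ((e x : A) : M ⧸ C) = πX x := fun x => rfl
  let f : A →ₗ[R] M := X.subtype.comp e.symm.toLinearMap
  have hf : ∀ a : A, f a = ((e.symm a : X) : M) := fun a => rfl
  obtain ⟨g, hg⟩ := inj.out A.subtype (Submodule.injective_subtype A) f
  have hginj : Function.Injective g := by
    rw [← LinearMap.ker_eq_bot]
    by_contra hker
    obtain ⟨q, ⟨hqA, hqK⟩, hq0⟩ := (Submodule.ne_bot_iff _).mp (hAess (LinearMap.ker g) hker)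
    have h1 : g q = f ⟨q, hqA⟩ := hg ⟨q, hqA⟩
    have h2 : g q = 0 := hqK
    have h3 : ((e.symm ⟨q, hqA⟩ : X) : M) = 0 := by rw [← hf, ← h1, h2]
    have h4 : (⟨q, hqA⟩ : A) = 0 := by
      have : e.symm ⟨q, hqA⟩ = 0 := Subtype.ext h3
      have := congrArg e this
      rwa [LinearEquiv.apply_symm_apply, map_zero] at this
    exact hq0 (congrArg Subtype.val h4)
  have hXle : ∀ x (hx : x ∈ X), g (π x) = x := by
    intro x hx
    have h1 : π x = (A.subtype) (e ⟨x, hx⟩) := (he ⟨x, hx⟩).symm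
    rw [h1, hg, hf, LinearEquiv.symm_apply_apply]
  have hXler : X ≤ LinearMap.range g := fun x hx => ⟨π x, hXle x hx⟩
  have hgA : ∀ q (hq : q ∈ A), g q ∈ X := by
    intro q hq
    have h1 : g q = f ⟨q, hq⟩ := hg ⟨q, hq⟩
    rw [h1, hf]
    exact (e.symm ⟨q, hq⟩).2
  have hessrange : EssIn E (LinearMap.range g) := by
    refine ⟨hX.1.trans hXler, fun P hP hPne => ?_⟩
    have hXP : X ⊓ P ≠ ⊥ := by
      have hcomap : P.comap g ≠ ⊥ := by
        obtain ⟨p0, hpP, hp0⟩ := (Submodule.ne_bot_iff _).mp hPne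
        obtain ⟨q, rfl⟩ := hP hpP
        exact (Submodule.ne_bot_iff _).mpr ⟨q, hpP, fun h => hp0 (by rw [h, map_zero])⟩
      obtain ⟨q, ⟨hqA, hqP⟩, hq0⟩ := (Submodule.ne_bot_iff _).mp (hAess _ hcomap)
      exact (Submodule.ne_bot_iff _).mpr
        ⟨g q, ⟨hgA q hqA, hqP⟩, fun h => hq0 (hginj (by rw [h, map_zero]))⟩
    have h5 := hX.2 (X ⊓ P) inf_le_left hXP
    intro hb
    exact h5 (le_bot_iff.mp (hb ▸ inf_le_inf_left E inf_le_right))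
  have hrg : LinearMap.range g = X := hmax _ hessrange hXler
  set p : M →ₗ[R] M := g.comp π with hp
  have hpmem : ∀ m, p m ∈ X := fun m => hrg ▸ ⟨π m, rfl⟩
  have hpX : ∀ x ∈ X, p x = x := fun x hx => hXle x hx
  refine ⟨LinearMap.ker p, ?_, ?_⟩
  · rw [disjoint_iff, Submodule.eq_bot_iff]
    rintro z ⟨hzX, hzK⟩
    have : p z = 0 := hzK
    rw [hpX z hzX] at this
    exact this
  · rw [codisjoint_iff, eq_top_iff]
    intro m _
    have h1 : m - p m ∈ LinearMap.ker p := by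
      rw [LinearMap.mem_ker, map_sub, hpX (p m) (hpmem m), sub_self]
    exact Submodule.mem_sup.mpr ⟨p m, hpmem m, m - p m, h1, by exact add_sub_cancel (p m) m⟩

/-- An injective submodule is a direct summand. -/
theorem summand_of_injective_submodule {N : Submodule R M}
    (hN : Module.Injective R N) : ∃ C, IsCompl N C := by
  obtain ⟨p, hp⟩ := hN.out N.subtype (Submodule.injective_subtype N) (LinearMap.id)
  have hpX : ∀ x (hx : x ∈ N), p x = ⟨x, hx⟩ := fun x hx => hp ⟨x, hx⟩
  refine ⟨LinearMap.ker p, ?_, ?_⟩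
  · rw [disjoint_iff, Submodule.eq_bot_iff]
    rintro z ⟨hzN, hzK⟩
    have h1 : p z = 0 := hzK
    rw [hpX z hzN] at h1
    exact congrArg Subtype.val h1
  · rw [codisjoint_iff, eq_top_iff]
    intro m _
    have h1 : m - (p m : M) ∈ LinearMap.ker p := by
      rw [LinearMap.mem_ker, map_sub, hpX (p m) (p m).2]
      simp
    exact Submodule.mem_sup.mpr ⟨p m, (p m).2, m - p m, h1, add_sub_cancel _ m⟩

/-- A direct summand of an injective module is injective. -/
theorem injective_of_summand (inj : Module.Injective R M) {N C : Submodule R M}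
    (h : IsCompl N C) : Module.Injective R N := by
  constructor
  intro X Y _ _ _ _ i hi f
  obtain ⟨h', hh'⟩ := inj.out i hi (N.subtype.comp f)
  refine ⟨(N.linearProjOfIsCompl C h).comp h', fun x => ?_⟩
  have h1 : h' (i x) = N.subtype (f x) := hh' x
  show N.linearProjOfIsCompl C h (h' (i x)) = f x
  rw [h1]
  exact Submodule.linearProjOfIsCompl_apply_left h (f x)

/-- In an indecomposable injective module, every nonzero submodule is essential. -/
theorem essential_of_indec (inj : Module.Injective R M)
    (hind : Nontrivial M ∧ ∀ N P : Submodule R M, IsCompl N P → N = ⊥ ∨ P = ⊥)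
    {N : Submodule R M} (hN : N ≠ ⊥) :
    ∀ P : Submodule R M, P ≠ ⊥ → N ⊓ P ≠ ⊥ := by
  obtain ⟨X, hX, hXmax⟩ := exists_maximal_essIn N
  obtain ⟨C, hC⟩ := summand_of_max_ess inj hX hXmax
  rcases hind.2 X C hC with hX0 | hC0
  · exact absurd (le_bot_iff.mp (hX0 ▸ hX.1)) hN
  · have hXtop : X = ⊤ := by
      have := hC.codisjoint
      rw [hC0, codisjoint_iff, sup_bot_eq] at this
      exact this
    intro P hP
    exact hX.2 P (hXtop ▸ le_top) hP

theorem part2 (inj : Module.Injective R M)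
    (hind : Nontrivial M ∧ ∀ N P : Submodule R M, IsCompl N P → N = ⊥ ∨ P = ⊥)
    (hess : ∀ N : Submodule R M, N ≠ ⊥ → ∀ P : Submodule R M, P ≠ ⊥ → N ⊓ P ≠ ⊥) :
    ∃ (I : Ideal R) (f : (R ⧸ I) →ₗ[R] M),
      Function.Injective f ∧ ∀ P : Submodule R M, P ≠ ⊥ → LinearMap.range f ⊓ P ≠ ⊥ := by
  have : Nontrivial M := hind.1
  obtain ⟨x, hx⟩ := exists_ne (0 : M)
  set τ := LinearMap.toSpanSingleton R M x with hτ
  refine ⟨LinearMap.ker τ, Submodule.liftQ _ τ le_rfl, ?_, ?_⟩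
  · rw [← LinearMap.ker_eq_bot]
    exact Submodule.ker_liftQ_eq_bot' _ τ rfl
  · have hr : LinearMap.range (Submodule.liftQ (LinearMap.ker τ) τ le_rfl) = LinearMap.range τ :=
      Submodule.range_liftQ _ _ _
    rw [hr]
    apply hess
    rw [Submodule.ne_bot_iff]
    exact ⟨x, ⟨1, by rw [hτ, LinearMap.toSpanSingleton_apply_one]⟩, hx⟩

/-- Every nonzero cyclic submodule over a Noetherian ring contains a uniform submodule. -/
theorem exists_uniform [IsNoetherianRing R] {x : M} (hx : x ≠ 0) :
    ∃ U : Submodule R M, U ≠ ⊥ ∧ U ≤ Submodule.span R {x} ∧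
      ∀ A B : Submodule R M, A ≤ U → B ≤ U → A ≠ ⊥ → B ≠ ⊥ → A ⊓ B ≠ ⊥ := by
  classical
  set W := Submodule.span R {x} with hW
  have hWfg : W.FG := ⟨{x}, by simp [hW]⟩
  have hWfin : Module.Finite R W := (Module.Finite.iff_fg).mpr hWfg
  have hWnoeth : IsNoetherian R W := inferInstance
  by_contra hcon
  push_neg at hcon
  have hstep : ∀ V : Submodule R M, V ≠ ⊥ → V ≤ W →
      ∃ A B : Submodule R M, A ≤ V ∧ B ≤ V ∧ A ≠ ⊥ ∧ B ≠ ⊥ ∧ A ⊓ B = ⊥ := by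
    intro V hV hVW
    obtain ⟨A, B, hAV, hBV, hA, hB, hAB⟩ := hcon V hV hVW
    exact ⟨A, B, hAV, hBV, hA, hB, hAB⟩
  -- build a strictly increasing chain
  have hWne : W ≠ ⊥ := by
    rw [Submodule.ne_bot_iff]
    exact ⟨x, Submodule.mem_span_singleton_self x, hx⟩
  let T := {V : Submodule R M // V ≠ ⊥ ∧ V ≤ W}
  have step : ∀ V : T, ∃ AB : Submodule R M × Submodule R M,
      AB.1 ≤ V.1 ∧ AB.2 ≤ V.1 ∧ AB.1 ≠ ⊥ ∧ AB.2 ≠ ⊥ ∧ AB.1 ⊓ AB.2 = ⊥ := by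
    rintro ⟨V, hV, hVW⟩
    obtain ⟨A, B, h1, h2, h3, h4, h5⟩ := hstep V hV hVW
    exact ⟨(A, B), h1, h2, h3, h4, h5⟩
  choose AB hA hB hAne hBne hABdisj using step
  let next : T → T := fun V => ⟨(AB V).2, hBne V, (hB V).trans V.2.2⟩
  let V : ℕ → T := fun n => next^[n] ⟨W, hWne, le_rfl⟩
  have hVsucc : ∀ n, V (n + 1) = next (V n) := fun n => Function.iterate_succ_apply' next n _
  let Aseq : ℕ → Submodule R M := fun n => (AB (V n)).1
  let S : ℕ → Submodule R M := fun n => Nat.rec ⊥ (fun k Sk => Sk ⊔ Aseq k) n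
  have hS0 : S 0 = ⊥ := rfl
  have hSsucc : ∀ n, S (n + 1) = S n ⊔ Aseq n := fun n => rfl
  -- invariant
  have hinv : ∀ n, S n ⊓ (V n).1 = ⊥ := by
    intro n
    induction n with
    | zero => rw [hS0]; exact bot_inf_eq _
    | succ k ih =>
      rw [hSsucc, Submodule.eq_bot_iff]
      rintro z ⟨hzS, hzV⟩
      obtain ⟨s, hs, a, ha, rfl⟩ := Submodule.mem_sup.mp hzS
      have hVk1 : (V (k+1)).1 = (AB (V k)).2 := by rw [hVsucc]
      have hzVk : s + a ∈ (AB (V k)).2 := hVk1 ▸ hzV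
      have haVk : a ∈ (V k).1 := hA (V k) ha
      have hzVk' : s + a ∈ (V k).1 := hB (V k) hzVk
      have hsVk : s ∈ (V k).1 := by
        have := Submodule.sub_mem _ hzVk' haVk
        simpa using this
      have hs0 : s = 0 := by
        have : s ∈ S k ⊓ (V k).1 := ⟨hs, hsVk⟩
        rwa [ih, Submodule.mem_bot] at this
      subst hs0
      have : a ∈ (AB (V k)).1 ⊓ (AB (V k)).2 := ⟨ha, by simpa using hzVk⟩
      rw [hABdisj, Submodule.mem_bot] at this
      simpa [this]
  have hSmono : ∀ n, S n < S (n + 1) := by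
    intro n
    rw [hSsucc]
    refine lt_of_le_of_ne le_sup_left ?_
    intro heq
    have hle : Aseq n ≤ S n := le_sup_right.trans heq.ge
    have : Aseq n ≤ S n ⊓ (V n).1 := le_inf hle (hA (V n))
    rw [hinv n] at this
    exact hAne (V n) (le_bot_iff.mp this)
  have hSW : ∀ n, S n ≤ W := by
    intro n
    induction n with
    | zero => rw [hS0]; exact bot_le
    | succ k ih => rw [hSsucc]; exact sup_le ih ((hA (V k)).trans (V k).2.2)
  -- contradiction with Noetherian
  have hSmono' : Monotone S := monotone_nat_of_le_succ (fun n => (hSmono n).le)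
  let S' : ℕ →o Submodule R W := ⟨fun n => (S n).comap W.subtype,
    fun a b hab => Submodule.comap_mono (hSmono' hab)⟩
  obtain ⟨n, hn⟩ := monotone_stabilizes_iff_noetherian.mpr hWnoeth S'
  have h1 : S' n = S' (n+1) := hn (n+1) (Nat.le_succ n)
  have hmap : ∀ k, Submodule.map W.subtype ((S k).comap W.subtype) = S k := fun k => by
    rw [Submodule.map_comap_subtype, inf_eq_right.mpr (hSW k)]
  have h2 : S n = S (n + 1) := by
    have h3 := congrArg (Submodule.map W.subtype) h1
    simp only [S', OrderHom.coe_mk] at h3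
    change Submodule.map W.subtype ((S n).comap W.subtype) = Submodule.map W.subtype ((S (n+1)).comap W.subtype) at h3
    rwa [hmap n, hmap (n+1)] at h3
  exact absurd h2 (hSmono n).ne

theorem inj_of_subsingleton {Q : Type u} [AddCommGroup Q] [Module R Q] [Subsingleton Q] :
    Module.Injective R Q := by
  constructor
  intro X Y _ _ _ _ i hi f
  exact ⟨0, fun x => Subsingleton.elim _ _⟩

theorem inj_equiv {Q Q' : Type u} [AddCommGroup Q] [Module R Q] [AddCommGroup Q'] [Module R Q']
    (e : Q ≃ₗ[R] Q') (h : Module.Injective R Q) : Module.Injective R Q' := by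
  constructor
  intro X Y _ _ _ _ i hi f
  obtain ⟨h', hh'⟩ := h.out i hi (e.symm.toLinearMap.comp f)
  refine ⟨e.toLinearMap.comp h', fun x => ?_⟩
  show e (h' (i x)) = f x
  rw [hh' x]
  exact e.apply_symm_apply (f x)

theorem inj_prod {Q Q' : Type u} [AddCommGroup Q] [Module R Q] [AddCommGroup Q'] [Module R Q']
    (h : Module.Injective R Q) (h' : Module.Injective R Q') : Module.Injective R (Q × Q') := by
  constructor
  intro X Y _ _ _ _ i hi f
  obtain ⟨g1, hg1⟩ := h.out i hi ((LinearMap.fst R Q Q').comp f)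
  obtain ⟨g2, hg2⟩ := h'.out i hi ((LinearMap.snd R Q Q').comp f)
  refine ⟨g1.prod g2, fun x => ?_⟩
  show (g1 (i x), g2 (i x)) = f x
  rw [hg1 x, hg2 x]
  rfl

theorem inj_sup {A B : Submodule R M} (hAB : A ⊓ B = ⊥)
    (hA : Module.Injective R A) (hB : Module.Injective R B) :
    Module.Injective R ↥(A ⊔ B) := by
  set W := A ⊔ B with hW
  set A' : Submodule R W := A.comap W.subtype with hA'
  set B' : Submodule R W := B.comap W.subtype with hB'
  have hcompl : IsCompl A' B' := by
    constructor
    · rw [disjoint_iff, Submodule.eq_bot_iff]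
      rintro z ⟨hzA, hzB⟩
      have : (z : M) ∈ A ⊓ B := ⟨hzA, hzB⟩
      rw [hAB, Submodule.mem_bot] at this
      exact Subtype.ext this
    · rw [codisjoint_iff, eq_top_iff]
      rintro ⟨z, hz⟩ _
      obtain ⟨a, ha, b, hb, rfl⟩ := Submodule.mem_sup.mp hz
      refine Submodule.mem_sup.mpr ⟨⟨a, Submodule.mem_sup_left ha⟩, ?_, ⟨b, Submodule.mem_sup_right hb⟩, ?_, rfl⟩
      · exact ha
      · exact hb
  have eA : ↥A' ≃ₗ[R] ↥A := Submodule.comapSubtypeEquivOfLe (le_sup_left : A ≤ W)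
  have eB : ↥B' ≃ₗ[R] ↥B := Submodule.comapSubtypeEquivOfLe (le_sup_right : B ≤ W)
  have hA'inj : Module.Injective R ↥A' := inj_equiv eA.symm hA
  have hB'inj : Module.Injective R ↥B' := inj_equiv eB.symm hB
  exact inj_equiv (Submodule.prodEquivOfIsCompl A' B' hcompl) (inj_prod hA'inj hB'inj)

theorem inj_finset_sup {S : Set (Submodule R M)} (hSind : sSupIndep S)
    (hSinj : ∀ A ∈ S, Module.Injective R A) :
    ∀ t : Finset (Submodule R M), ↑t ⊆ S → Module.Injective R ↥(t.sup id) := by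
  classical
  intro t
  induction t using Finset.induction_on with
  | empty =>
    intro _
    rw [Finset.sup_empty]
    exact inj_of_subsingleton
  | @insert A t hAt ih =>
    intro hts
    have hAS : A ∈ S := hts (Finset.mem_insert_self A t)
    have hts' : ↑t ⊆ S := fun x hx => hts (Finset.mem_insert_of_mem hx)
    rw [Finset.sup_insert]
    have hdisj : A ⊓ t.sup id = ⊥ := by
      have h1 : t.sup id ≤ sSup (S \ {A}) := by
        refine Finset.sup_le fun B hB => ?_
        refine le_sSup ⟨hts' hB, ?_⟩
        intro hBA
        rw [Set.mem_singleton_iff] at hBA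
        exact hAt (hBA ▸ hB)
      have h2 := hSind hAS
      rw [disjoint_iff] at h2
      rw [← le_bot_iff, ← h2]
      exact inf_le_inf_left A h1
    exact inj_sup hdisj (hSinj A hAS) (ih hts')

/-- Over a left Noetherian ring, the (internal) direct sum of injective submodules is
injective. -/
theorem inj_sSup [IsNoetherianRing R] {S : Set (Submodule R M)} (hSind : sSupIndep S)
    (hSinj : ∀ A ∈ S, Module.Injective R A) :
    Module.Injective R ↥(sSup S) := by
  classical
  set N := sSup S with hN
  apply Module.Baer.injective
  intro I g
  -- the image of g is a finitely generated submodule of M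
  set G : ↥I →ₗ[R] M := N.subtype.comp g with hG
  have hKfg : (LinearMap.range G).FG := by
    have h1 : (⊤ : Submodule R ↥I).FG := IsNoetherian.noetherian ⊤
    rw [LinearMap.range_eq_map]
    exact h1.map G
  have hKle : LinearMap.range G ≤ N := by
    rintro z ⟨a, rfl⟩
    exact (g a).2
  have hcomp := (Submodule.fg_iff_compact _).mp hKfg
  rw [CompleteLattice.isCompactElement_iff_exists_le_iSup_of_le_iSup] at hcomp
  have hNsup : N = ⨆ (A : S), (A : Submodule R M) := by rw [hN, sSup_eq_iSup']
  obtain ⟨t, ht⟩ := hcomp S ((↑) : S → Submodule R M) (by rw [← hNsup]; exact hKle)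
  set t' : Finset (Submodule R M) := t.image Subtype.val with ht'
  have htt' : t.sup ((↑) : S → Submodule R M) = t'.sup id := by
    rw [ht', Finset.sup_image]
    rfl
  have ht'S : ↑t' ⊆ S := by
    intro A hA
    rw [ht'] at hA
    obtain ⟨⟨B, hBS⟩, _, rfl⟩ := Finset.mem_image.mp hA
    exact hBS
  set F := t'.sup id with hF
  have hKF : LinearMap.range G ≤ F := htt' ▸ ht
  have hFN : F ≤ N := by
    rw [hF]
    refine Finset.sup_le fun B hB => ?_
    exact le_sSup (ht'S hB)
  have hFinj : Module.Injective R ↥F := inj_finset_sup hSind hSinj t' ht'S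
  set g' : ↥I →ₗ[R] ↥F := LinearMap.codRestrict F G (fun a => hKF ⟨a, rfl⟩) with hg'
  obtain ⟨h, hh⟩ := hFinj.out I.subtype (Submodule.injective_subtype I) g'
  refine ⟨(Submodule.inclusion hFN).comp h, fun x hx => ?_⟩
  apply Subtype.ext
  show ((Submodule.inclusion hFN) (h x) : M) = (g ⟨x, hx⟩ : M)
  have h1 : h x = g' ⟨x, hx⟩ := hh ⟨x, hx⟩
  have h2 : ((Submodule.inclusion hFN) (h x) : M) = (h x : M) := rfl
  rw [h2, h1]
  rfl

theorem indec_of_uniform {U X : Submodule R M} (hU : U ≠ ⊥)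
    (hUuni : ∀ A B : Submodule R M, A ≤ U → B ≤ U → A ≠ ⊥ → B ≠ ⊥ → A ⊓ B ≠ ⊥)
    (hE : EssIn U X) :
    Nontrivial ↥X ∧ ∀ N P : Submodule R ↥X, IsCompl N P → N = ⊥ ∨ P = ⊥ := by
  constructor
  · obtain ⟨u, huU, hu0⟩ := (Submodule.ne_bot_iff U).mp hU
    exact nontrivial_of_ne ⟨u, hE.1 huU⟩ 0 (fun h => hu0 (congrArg Subtype.val h))
  · intro N' P' hcompl
    by_contra hcon
    push_neg at hcon
    obtain ⟨hN', hP'⟩ := hcon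
    set N := N'.map X.subtype with hNdef
    set P := P'.map X.subtype with hPdef
    have hNP : N ⊓ P = ⊥ := by
      rw [Submodule.eq_bot_iff]
      rintro z ⟨hzN, hzP⟩
      obtain ⟨y, hy, rfl⟩ := hzN
      have hyP' : y ∈ P' := by
        obtain ⟨y', hy', he⟩ := hzP
        exact (Subtype.ext he : y' = y) ▸ hy'
      have hy2 : y ∈ N' ⊓ P' := ⟨hy, hyP'⟩
      rw [disjoint_iff.mp hcompl.disjoint, Submodule.mem_bot] at hy2
      rw [hy2]
      rfl
    have hNne : N ≠ ⊥ := by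
      obtain ⟨y, hy, h0⟩ := (Submodule.ne_bot_iff N').mp hN'
      exact (Submodule.ne_bot_iff N).mpr ⟨y, ⟨y, hy, rfl⟩, fun h => h0 (Subtype.ext h)⟩
    have hPne : P ≠ ⊥ := by
      obtain ⟨y, hy, h0⟩ := (Submodule.ne_bot_iff P').mp hP'
      exact (Submodule.ne_bot_iff P).mpr ⟨y, ⟨y, hy, rfl⟩, fun h => h0 (Subtype.ext h)⟩
    have h1 := hE.2 N (Submodule.map_subtype_le X N') hNne
    have h2 := hE.2 P (Submodule.map_subtype_le X P') hPne
    apply hUuni (U ⊓ N) (U ⊓ P) inf_le_left inf_le_left h1 h2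
    rw [← le_bot_iff, ← hNP]
    exact le_inf (inf_le_left.trans inf_le_right) (inf_le_right.trans inf_le_right)

theorem part1 [IsNoetherianRing R] (inj : Module.Injective R M) :
    ∃ S : Set (Submodule R M), sSupIndep S ∧ sSup S = ⊤ ∧
      ∀ A ∈ S, Module.Injective R ↥A ∧
        (Nontrivial ↥A ∧ ∀ N P : Submodule R ↥A, IsCompl N P → N = ⊥ ∨ P = ⊥) := by
  classical
  set 𝒮 : Set (Set (Submodule R M)) :=
    {S | sSupIndep S ∧ ∀ A ∈ S, A ≠ ⊥ ∧ Module.Injective R ↥A ∧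
      (Nontrivial ↥A ∧ ∀ N P : Submodule R ↥A, IsCompl N P → N = ⊥ ∨ P = ⊥)} with h𝒮
  have hzorn : ∀ c ⊆ 𝒮, IsChain (· ⊆ ·) c → ∃ ub ∈ 𝒮, ∀ s ∈ c, s ⊆ ub := by
    intro c hc hchain
    refine ⟨⋃₀ c, ⟨iSupIndep_sUnion_of_directed hchain.directedOn (fun a ha => (hc ha).1), ?_⟩,
      fun s hs => Set.subset_sUnion_of_mem hs⟩
    rintro A ⟨s, hsc, hAs⟩
    exact (hc hsc).2 A hAs
  obtain ⟨S, hS, hSmax⟩ := zorn_subset 𝒮 hzorn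
  obtain ⟨hSind, hSprop⟩ := hS
  have hSinj : ∀ A ∈ S, Module.Injective R ↥A := fun A hA => (hSprop A hA).2.1
  set N := sSup S with hNdef
  have hNinj : Module.Injective R ↥N := inj_sSup hSind hSinj
  obtain ⟨C, hC⟩ := summand_of_injective_submodule hNinj
  have hCbot : C = ⊥ := by
    by_contra hCne
    obtain ⟨x, hxC, hx0⟩ := (Submodule.ne_bot_iff C).mp hCne
    obtain ⟨U, hUne, hUspan, hUuni⟩ := exists_uniform (R := R) hx0
    have hUC : U ≤ C := hUspan.trans ((Submodule.span_singleton_le_iff_mem x C).mpr hxC)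
    obtain ⟨X, hXess, hXmax⟩ := exists_maximal_essIn U
    obtain ⟨D, hD⟩ := summand_of_max_ess inj hXess hXmax
    have hXinj : Module.Injective R ↥X := injective_of_summand inj hD
    have hXindec := indec_of_uniform hUne hUuni hXess
    have hXne : X ≠ ⊥ := fun h => hUne (le_bot_iff.mp (h ▸ hXess.1))
    have hXN : X ⊓ N = ⊥ := by
      by_contra hXNne
      have h1 := hXess.2 (X ⊓ N) inf_le_left hXNne
      obtain ⟨u, ⟨huU, _, huN⟩, hu0⟩ := (Submodule.ne_bot_iff _).mp h1
      have : u ∈ C ⊓ N := ⟨hUC huU, huN⟩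
      rw [disjoint_iff.mp hC.disjoint.symm] at this
      exact hu0 ((Submodule.mem_bot R).mp this)
    have hXS : X ∉ S := by
      intro hXS
      apply hXne
      rw [← le_bot_iff, ← hXN]
      exact le_inf le_rfl (le_sSup hXS)
    have hS' : insert X S ∈ 𝒮 := by
      constructor
      · -- sSupIndep (insert X S)
        intro A hA
        rcases hA with rfl | hAS
        · have h1 : sSup (insert A S \ {A}) ≤ N := by
            refine sSup_le fun B hB => ?_
            rcases hB.1 with rfl | hBS
            · exact absurd rfl hB.2
            · exact le_sSup hBS
          rw [disjoint_iff]
          rw [← le_bot_iff, ← hXN]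
          exact le_inf inf_le_left (inf_le_right.trans h1)
        · rw [disjoint_iff, Submodule.eq_bot_iff]
          rintro z ⟨hzA, hzR⟩
          have h1 : sSup (insert X S \ {A}) ≤ X ⊔ sSup (S \ {A}) := by
            refine sSup_le fun B hB => ?_
            rcases hB.1 with rfl | hBS
            · exact le_sup_left
            · exact (le_sSup (show _ ∈ S \ {A} from ⟨hBS, hB.2⟩)).trans le_sup_right
          obtain ⟨xx, hxx, ee, hee, rfl⟩ := Submodule.mem_sup.mp (h1 hzR)
          have hzN : xx + ee ∈ N := le_sSup hAS hzA
          have heeN : ee ∈ N := (sSup_le_sSup (Set.diff_subset : S \ {A} ⊆ S)) hee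
          have hxxN : xx ∈ X ⊓ N := ⟨hxx, by simpa using N.sub_mem hzN heeN⟩
          rw [hXN, Submodule.mem_bot] at hxxN
          rw [hxxN, zero_add] at hzA ⊢
          have : ee ∈ A ⊓ sSup (S \ {A}) := ⟨hzA, hee⟩
          rwa [disjoint_iff.mp (hSind hAS), Submodule.mem_bot] at this
      · rintro A hA
        rcases hA with rfl | hAS
        · exact ⟨hXne, hXinj, hXindec⟩
        · exact hSprop A hAS
    have hins := hSmax hS' (Set.subset_insert X S)
    exact hXS (hins (Set.mem_insert X S))
  have hNtop : N = ⊤ := by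
    have := hC.codisjoint
    rw [hCbot, codisjoint_iff, sup_bot_eq] at this
    exact this
  refine ⟨S, hSind, hNtop ▸ rfl, fun A hA => ⟨hSinj A hA, (hSprop A hA).2.2⟩⟩

theorem ext_el (inj : Module.Injective R M) (W : Submodule R M)
    (p : Σ I : Ideal R, (↥I →ₗ[R] ↥W)) :
    ∃ m : M, ∀ r (hr : r ∈ p.1), r • m = ((p.2 ⟨r, hr⟩ : ↥W) : M) := by
  obtain ⟨h, hh⟩ := inj.out p.1.subtype (Submodule.injective_subtype p.1) (W.subtype.comp p.2)
  refine ⟨h 1, fun r hr => ?_⟩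
  have h1 : h r = r • h 1 := by rw [← map_smul, smul_eq_mul, mul_one]
  rw [← h1]
  exact hh ⟨r, hr⟩

noncomputable def eEl (inj : Module.Injective R M) (W : Submodule R M)
    (p : Σ I : Ideal R, (↥I →ₗ[R] ↥W)) : M :=
  (ext_el inj W p).choose

theorem eEl_spec (inj : Module.Injective R M) (W : Submodule R M)
    (p : Σ I : Ideal R, (↥I →ₗ[R] ↥W)) :
    ∀ r (hr : r ∈ p.1), r • (eEl inj W p) = ((p.2 ⟨r, hr⟩ : ↥W) : M) :=
  (ext_el inj W p).choose_spec

noncomputable def stepSub (inj : Module.Injective R M) (W : Submodule R M) : Submodule R M :=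
  W ⊔ ⨆ p : (Σ I : Ideal R, (↥I →ₗ[R] ↥W)), Submodule.span R {eEl inj W p}

noncomputable def chain (inj : Module.Injective R M) (x : M) : ℕ → Submodule R M
  | 0 => Submodule.span R {x}
  | n+1 => stepSub inj (chain inj x n)

theorem chain_mono (inj : Module.Injective R M) (x : M) : Monotone (chain inj x) :=
  monotone_nat_of_le_succ (fun _ => le_sup_left)

theorem chain_sup_injective [IsNoetherianRing R] (inj : Module.Injective R M) (x : M) :
    Module.Injective R ↥(⨆ n, chain inj x n) := by
  classical
  set X := ⨆ n, chain inj x n with hX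
  apply Module.Baer.injective
  intro I g
  have hdir : Directed (· ≤ ·) (chain inj x) := (chain_mono inj x).directed_le
  obtain ⟨s, hs⟩ := (IsNoetherian.noetherian I : I.FG)
  have hmem : ∀ r ∈ s, ∃ n, ∀ (h : r ∈ I), ((g ⟨r, h⟩ : ↥X) : M) ∈ chain inj x n := by
    intro r hr
    have hrI : r ∈ I := hs ▸ Submodule.subset_span hr
    have h2 : ((g ⟨r, hrI⟩ : ↥X) : M) ∈ ⨆ n, chain inj x n := (g ⟨r, hrI⟩).2
    obtain ⟨n, hn⟩ := (Submodule.mem_iSup_of_directed _ hdir).mp h2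
    exact ⟨n, fun h => hn⟩
  choose nf hnf using hmem
  set n₀ := s.attach.sup (fun r => nf r.1 r.2) with hn₀
  have hgen : ∀ a (haI : a ∈ I), ((g ⟨a, haI⟩ : ↥X) : M) ∈ chain inj x n₀ := by
    intro a haI
    have haS : a ∈ Submodule.span R (↑s : Set R) := hs.symm ▸ haI
    refine Submodule.span_induction
      (p := fun a _ => ∀ h : a ∈ I, ((g ⟨a, h⟩ : ↥X) : M) ∈ chain inj x n₀)
      ?_ ?_ ?_ ?_ haS haI
    · intro r hr h
      have hle : nf r hr ≤ n₀ :=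
        Finset.le_sup (f := fun r : {y // y ∈ s} => nf r.1 r.2) (s.mem_attach ⟨r, hr⟩)
      exact chain_mono inj x hle (hnf r hr h)
    · intro h
      have h0 : (⟨(0:R), h⟩ : ↥I) = 0 := rfl
      rw [h0, map_zero]
      exact Submodule.zero_mem _
    · intro a b ha hb iha ihb h
      have haI' : a ∈ I := hs ▸ ha
      have hbI' : b ∈ I := hs ▸ hb
      have hadd : (⟨a + b, h⟩ : ↥I) = ⟨a, haI'⟩ + ⟨b, hbI'⟩ := rfl
      rw [hadd, map_add]
      exact Submodule.add_mem _ (iha haI') (ihb hbI')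
    · intro r a ha iha h
      have haI' : a ∈ I := hs ▸ ha
      have hsmul : (⟨r • a, h⟩ : ↥I) = r • ⟨a, haI'⟩ := rfl
      rw [hsmul, map_smul]
      exact Submodule.smul_mem _ r (iha haI')
  set G : ↥I →ₗ[R] M := X.subtype.comp g with hG
  set φ : ↥I →ₗ[R] ↥(chain inj x n₀) :=
    LinearMap.codRestrict _ G (fun a => hgen a.1 a.2) with hφ
  set pp : Σ J : Ideal R, (↥J →ₗ[R] ↥(chain inj x n₀)) := ⟨I, φ⟩ with hpp
  set m := eEl inj (chain inj x n₀) pp with hm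
  have hmX : m ∈ X := by
    have h1 : m ∈ stepSub inj (chain inj x n₀) :=
      Submodule.mem_sup_right ((le_iSup
        (fun p => Submodule.span R {eEl inj (chain inj x n₀) p}) pp)
        (Submodule.mem_span_singleton_self m))
    exact le_iSup (chain inj x) (n₀+1) h1
  refine ⟨LinearMap.toSpanSingleton R ↥X ⟨m, hmX⟩, fun r hr => ?_⟩
  apply Subtype.ext
  show ((r • (⟨m, hmX⟩ : ↥X) : ↥X) : M) = ((g ⟨r, hr⟩ : ↥X) : M)
  rw [Submodule.coe_smul]
  exact eEl_spec inj (chain inj x n₀) pp r hr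

theorem card_finsupp_le (β : Type u) (γ : Type u) [AddCommGroup γ] :
    Cardinal.mk (β →₀ γ) ≤ max Cardinal.aleph0 (Cardinal.mk β * Cardinal.mk γ) := by
  classical
  have h1 : Cardinal.mk (β →₀ γ) ≤ Cardinal.mk (Finset (β × γ)) :=
    Cardinal.mk_le_of_injective (Finsupp.graph_injective β γ)
  have h2 : Cardinal.mk (Finset (β × γ)) ≤ Cardinal.mk (List (β × γ)) :=
    Cardinal.mk_le_of_surjective (f := fun l : List (β × γ) => l.toFinset)
      (fun t => ⟨t.toList, Finset.toList_toFinset t⟩)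
  have h3 := Cardinal.mk_list_le_max (β × γ)
  have h4 : Cardinal.mk (β × γ) = Cardinal.mk β * Cardinal.mk γ := by
    simpa using Cardinal.mk_prod β γ
  calc Cardinal.mk (β →₀ γ) ≤ _ := h1
    _ ≤ _ := h2
    _ ≤ _ := h3
    _ ≤ _ := by rw [h4]

theorem card_span_le (s : Set M) :
    Cardinal.mk ↥(Submodule.span R s) ≤
      max Cardinal.aleph0 (Cardinal.mk s * Cardinal.mk R) := by
  classical
  have hsurj : Function.Surjective (fun f : (↥s →₀ R) =>
      (⟨Finsupp.linearCombination R ((↑) : ↥s → M) f, by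
        have h1 : Finsupp.linearCombination R ((↑) : ↥s → M) f ∈
            LinearMap.range (Finsupp.linearCombination R ((↑) : ↥s → M)) := ⟨f, rfl⟩
        rwa [Finsupp.range_linearCombination, Subtype.range_coe] at h1⟩ :
        ↥(Submodule.span R s))) := by
    rintro ⟨z, hz⟩
    have h1 : z ∈ LinearMap.range (Finsupp.linearCombination R ((↑) : ↥s → M)) := by
      rwa [Finsupp.range_linearCombination, Subtype.range_coe]
    obtain ⟨f, hf⟩ := h1
    exact ⟨f, Subtype.ext hf⟩
  exact (Cardinal.mk_le_of_surjective hsurj).trans (card_finsupp_le ↥s R)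

variable [IsNoetherianRing R]

theorem card_ideals_le : Cardinal.mk (Ideal R) ≤ Cardinal.mk R + Cardinal.aleph0 := by
  classical
  have hsurj : Function.Surjective (fun t : Finset R => Ideal.span (↑t : Set R)) := by
    intro I
    obtain ⟨t, ht⟩ := (IsNoetherian.noetherian I : I.FG)
    exact ⟨t, ht⟩
  have h1 := Cardinal.mk_le_of_surjective hsurj
  have h2 : Cardinal.mk (Finset R) ≤ Cardinal.mk (List R) :=
    Cardinal.mk_le_of_surjective (f := fun l : List R => l.toFinset)
      (fun t => ⟨t.toList, Finset.toList_toFinset t⟩)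
  have h3 := Cardinal.mk_list_le_max R
  have h4 : max Cardinal.aleph0 (Cardinal.mk R) ≤ Cardinal.mk R + Cardinal.aleph0 :=
    max_le (self_le_add_left _ _) (self_le_add_right _ _)
  exact ((h1.trans h2).trans h3).trans h4

theorem card_hom_le {W : Submodule R M} (I : Ideal R)
    (hW : Cardinal.mk ↥W ≤ Cardinal.mk R + Cardinal.aleph0) :
    Cardinal.mk (↥I →ₗ[R] ↥W) ≤ Cardinal.mk R + Cardinal.aleph0 := by
  classical
  set κ := Cardinal.mk R + Cardinal.aleph0 with hκ
  have hκℵ : Cardinal.aleph0 ≤ κ := self_le_add_left _ _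
  obtain ⟨t, ht⟩ := (IsNoetherian.noetherian I : I.FG)
  have hinj : Function.Injective (fun (φ : ↥I →ₗ[R] ↥W) (r : {y // y ∈ t}) =>
      φ ⟨r.1, ht ▸ Submodule.subset_span r.2⟩) := by
    intro φ ψ h
    ext ⟨a, ha⟩
    have haS : a ∈ Submodule.span R (↑t : Set R) := ht.symm ▸ ha
    have key : ∀ b (hb : b ∈ Submodule.span R (↑t : Set R)), ∀ h : b ∈ I,
        φ ⟨b, h⟩ = ψ ⟨b, h⟩ := by
      intro b hb
      refine Submodule.span_induction
        (p := fun b _ => ∀ h : b ∈ I, φ ⟨b, h⟩ = ψ ⟨b, h⟩) ?_ ?_ ?_ ?_ hb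
      · intro r hr hrI
        have := congrFun h ⟨r, hr⟩
        simpa using this
      · intro h0
        have : (⟨(0:R), h0⟩ : ↥I) = 0 := rfl
        rw [this, map_zero, map_zero]
      · intro a' b' ha' hb' iha ihb hab
        have haI : a' ∈ I := ht ▸ ha'
        have hbI : b' ∈ I := ht ▸ hb'
        have : (⟨a' + b', hab⟩ : ↥I) = ⟨a', haI⟩ + ⟨b', hbI⟩ := rfl
        rw [this, map_add, map_add, iha haI, ihb hbI]
      · intro r a' ha' iha hra
        have haI : a' ∈ I := ht ▸ ha'
        have : (⟨r • a', hra⟩ : ↥I) = r • ⟨a', haI⟩ := rfl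
        rw [this, map_smul, map_smul, iha haI]
    exact congrArg Subtype.val (key a haS ha)
  have h1 := Cardinal.mk_le_of_injective hinj
  have h2 : Cardinal.mk ({y // y ∈ t} → ↥W) = Cardinal.mk ↥W ^ Cardinal.mk {y // y ∈ t} :=
    (Cardinal.power_def _ _).symm
  have h3 : Cardinal.mk {y // y ∈ t} < Cardinal.aleph0 := by
    exact Cardinal.lt_aleph0_of_finite _
  calc Cardinal.mk (↥I →ₗ[R] ↥W) ≤ _ := h1
    _ = _ := h2
    _ ≤ κ ^ Cardinal.mk {y // y ∈ t} := Cardinal.power_le_power_right hW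
    _ ≤ κ := Cardinal.pow_le hκℵ h3

theorem card_sub_le_of_le {A B : Submodule R M} (h : A ≤ B) :
    Cardinal.mk ↥A ≤ Cardinal.mk ↥B :=
  Cardinal.mk_le_of_injective (Submodule.inclusion_injective h)

theorem card_chain_le (inj : Module.Injective R M) (x : M) :
    ∀ n, Cardinal.mk ↥(chain inj x n) ≤ Cardinal.mk R + Cardinal.aleph0 := by
  classical
  set κ := Cardinal.mk R + Cardinal.aleph0 with hκ
  have hκℵ : Cardinal.aleph0 ≤ κ := self_le_add_left _ _
  have hκR : Cardinal.mk R ≤ κ := self_le_add_right _ _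
  have hκκ : κ * κ = κ := Cardinal.mul_eq_self hκℵ
  have hspan : ∀ s : Set M, Cardinal.mk s ≤ κ → Cardinal.mk ↥(Submodule.span R s) ≤ κ := by
    intro s hsκ
    refine (card_span_le s).trans ?_
    refine max_le hκℵ ?_
    calc Cardinal.mk s * Cardinal.mk R ≤ κ * κ := mul_le_mul' hsκ hκR
      _ = κ := hκκ
  intro n
  induction n with
  | zero =>
    show Cardinal.mk ↥(Submodule.span R {x}) ≤ κ
    refine hspan {x} ?_
    rw [Cardinal.mk_singleton]
    exact le_trans (by exact_mod_cast Cardinal.one_le_aleph0) hκℵ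
  | succ k ih =>
    show Cardinal.mk ↥(stepSub inj (chain inj x k)) ≤ κ
    set W := chain inj x k with hW
    have hstep : stepSub inj W =
        Submodule.span R ((W : Set M) ∪ Set.range (fun p => eEl inj W p)) := by
      rw [Submodule.span_union, Submodule.span_eq, Submodule.span_range_eq_iSup]
      rfl
    rw [hstep]
    apply hspan
    refine (Cardinal.mk_union_le _ _).trans ?_
    have h1 : Cardinal.mk ↥(W : Set M) ≤ κ := ih
    have h2 : Cardinal.mk ↥(Set.range (fun p => eEl inj W p)) ≤ κ := by
      refine (Cardinal.mk_range_le).trans ?_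
      have h3 : Cardinal.mk (Σ I : Ideal R, (↥I →ₗ[R] ↥W)) ≤ Cardinal.mk (Ideal R) * κ := by
        rw [Cardinal.mk_sigma]
        calc Cardinal.sum (fun I : Ideal R => Cardinal.mk (↥I →ₗ[R] ↥W))
            ≤ Cardinal.sum (fun _ : Ideal R => κ) :=
              Cardinal.sum_le_sum _ _ (fun I => card_hom_le I ih)
          _ = Cardinal.mk (Ideal R) * κ := Cardinal.sum_const' _ _
      refine h3.trans ?_
      calc Cardinal.mk (Ideal R) * κ ≤ κ * κ := mul_le_mul' card_ideals_le le_rfl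
        _ = κ := hκκ
    calc Cardinal.mk ↥(W : Set M) + Cardinal.mk ↥(Set.range (fun p => eEl inj W p))
        ≤ κ + κ := add_le_add h1 h2
      _ = κ := Cardinal.add_eq_self hκℵ

theorem card_chain_sup_le (inj : Module.Injective R M) (x : M) :
    Cardinal.mk ↥(⨆ n, chain inj x n) ≤ Cardinal.mk R + Cardinal.aleph0 := by
  classical
  set κ := Cardinal.mk R + Cardinal.aleph0 with hκ
  have hκℵ : Cardinal.aleph0 ≤ κ := self_le_add_left _ _
  have hκκ : κ * κ = κ := Cardinal.mul_eq_self hκℵ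
  have hdir : Directed (· ≤ ·) (chain inj x) := (chain_mono inj x).directed_le
  have hch : ∀ z : ↥(⨆ n, chain inj x n), ∃ n, (z : M) ∈ chain inj x n := by
    intro z
    exact (Submodule.mem_iSup_of_directed _ hdir).mp z.2
  choose nz hnz using hch
  have hinj : Function.Injective
      (fun z : ↥(⨆ n, chain inj x n) => (⟨nz z, ⟨z, hnz z⟩⟩ : Σ n, ↥(chain inj x n))) := by
    intro a b hab
    have := congrArg (fun t : (Σ n, ↥(chain inj x n)) => ((t.2 : M) : M)) hab
    exact Subtype.ext this
  refine (Cardinal.mk_le_of_injective hinj).trans ?_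
  rw [Cardinal.mk_sigma]
  have hsum : Cardinal.sum (fun _ : ℕ => κ) = Cardinal.aleph0 * κ := by
    simp [Cardinal.sum_const]
  calc Cardinal.sum (fun n => Cardinal.mk ↥(chain inj x n))
      ≤ Cardinal.sum (fun _ : ℕ => κ) := Cardinal.sum_le_sum _ _ (fun n => card_chain_le inj x n)
    _ = Cardinal.aleph0 * κ := hsum
    _ ≤ κ * κ := mul_le_mul' hκℵ le_rfl
    _ = κ := hκκ

theorem part3 (inj : Module.Injective R M)
    (hind : Nontrivial M ∧ ∀ N P : Submodule R M, IsCompl N P → N = ⊥ ∨ P = ⊥) :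
    Cardinal.mk M ≤ Cardinal.mk R + Cardinal.aleph0 := by
  have : Nontrivial M := hind.1
  obtain ⟨x, hx⟩ := exists_ne (0 : M)
  set X := ⨆ n, chain inj x n with hX
  have hXinj : Module.Injective R ↥X := chain_sup_injective inj x
  obtain ⟨C, hC⟩ := summand_of_injective_submodule hXinj
  have hXne : X ≠ ⊥ := by
    rw [Submodule.ne_bot_iff]
    refine ⟨x, ?_, hx⟩
    exact le_iSup (chain inj x) 0 (Submodule.mem_span_singleton_self x)
  rcases hind.2 X C hC with h | h
  · exact absurd h hXne
  · have hXtop : X = ⊤ := by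
      have := hC.codisjoint
      rwa [h, codisjoint_iff, sup_bot_eq] at this
    have h1 : Cardinal.mk M = Cardinal.mk ↥X := by
      rw [hXtop]
      exact (Cardinal.mk_congr (Submodule.topEquiv.toEquiv)).symm
    rw [h1]
    exact card_chain_sup_le inj x

end MatlisAuxB

/-- **Matlis' theorems.**  Let `R` be a left Noetherian ring.  Then:
(1) every injective left `R`-module is a direct sum of indecomposable injective submodules;
(2) every indecomposable injective left `R`-module contains an essential copy of a cyclic
module `R ⧸ I` for some left ideal `I ⊆ R`;
(3) every indecomposable injective left `R`-module has cardinality at most `|R| + ℵ₀`, and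
consequently there is, up to isomorphism, only a set of indecomposable injective left
`R`-modules. -/
theorem matlis_structure_of_injectives
    (R : Type u) [Ring R] [IsNoetherianRing R] :
    (∀ (M : Type u) [AddCommGroup M] [Module R M], Module.Injective R M →
      ∃ (ι : Type u) (_ : DecidableEq ι) (A : ι → Submodule R M),
        (∀ i, Module.Injective R (A i)) ∧
        (∀ i, IsIndecomposableModule R (A i)) ∧
        DirectSum.IsInternal A) ∧
    (∀ (M : Type u) [AddCommGroup M] [Module R M], Module.Injective R M →
      IsIndecomposableModule R M →
      ∃ (I : Ideal R) (f : (R ⧸ I) →ₗ[R] M),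
        Function.Injective f ∧ IsEssentialSubmodule (LinearMap.range f)) ∧
    (∀ (M : Type u) [AddCommGroup M] [Module R M], Module.Injective R M →
      IsIndecomposableModule R M →
      Cardinal.mk M ≤ Cardinal.mk R + Cardinal.aleph0) ∧
    (∃ (ι : Type u) (V : ι → ModuleCat.{u} R),
      ∀ (M : ModuleCat.{u} R), Module.Injective R M → IsIndecomposableModule R M →
        ∃ i : ι, Nonempty (M ≅ V i)) := by
  classical
  refine ⟨?_, ?_, ?_, ?_⟩
  · -- part 1
    intro M _ _ hM
    obtain ⟨S, hSind, hStop, hSprop⟩ := MatlisAuxB.part1 hM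
    refine ⟨↥S, inferInstance, fun i => (i : Submodule R M), ?_, ?_, ?_⟩
    · exact fun i => (hSprop i i.2).1
    · exact fun i => (hSprop i i.2).2
    · refine DirectSum.isInternal_submodule_of_iSupIndep_of_iSup_eq_top ?_ ?_
      · exact (sSupIndep_iff S).mp hSind
      · rw [← sSup_eq_iSup']
        exact hStop
  · -- part 2
    intro M _ _ hM hind
    obtain ⟨I, f, hfinj, hfess⟩ := MatlisAuxB.part2 hM hind
      (fun N hN P hP => MatlisAuxB.essential_of_indec hM hind hN P hP)
    exact ⟨I, f, hfinj, hfess⟩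
  · -- part 3
    intro M _ _ hM hind
    exact MatlisAuxB.part3 hM hind
  · -- part 4
    refine ⟨Submodule R ((R × ℕ) →₀ R),
      fun K => ModuleCat.of R (((R × ℕ) →₀ R) ⧸ K), ?_⟩
    intro M hM hind
    have hcard : Cardinal.mk M ≤ Cardinal.mk R + Cardinal.aleph0 := MatlisAuxB.part3 hM hind
    have hRne : (1 : Cardinal.{u}) ≤ Cardinal.mk R :=
      Cardinal.one_le_iff_ne_zero.mpr (Cardinal.mk_ne_zero R)
    have h2 : Cardinal.mk M ≤ Cardinal.mk (R × ℕ) := by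
      have hprod : Cardinal.mk (R × ℕ) = Cardinal.mk R * Cardinal.aleph0 := by
        simp [Cardinal.mk_prod]
      rw [hprod]
      refine hcard.trans ?_
      have hmax : Cardinal.mk R + Cardinal.aleph0 = max (Cardinal.mk R) Cardinal.aleph0 := by
        rw [add_comm, Cardinal.add_eq_max le_rfl, max_comm]
      rw [hmax]
      refine max_le ?_ ?_
      · calc Cardinal.mk R = Cardinal.mk R * 1 := (mul_one _).symm
          _ ≤ Cardinal.mk R * Cardinal.aleph0 :=
            mul_le_mul' le_rfl (by exact_mod_cast Cardinal.one_le_aleph0)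
      · calc Cardinal.aleph0 = 1 * Cardinal.aleph0 := (one_mul _).symm
          _ ≤ Cardinal.mk R * Cardinal.aleph0 := mul_le_mul' hRne le_rfl
    obtain ⟨emb⟩ := Cardinal.le_def _ _ |>.mp h2
    have : Nontrivial M := hind.1
    let gsur : R × ℕ → M := Function.invFun emb
    have hg : Function.Surjective gsur := Function.invFun_surjective emb.injective
    let π : ((R × ℕ) →₀ R) →ₗ[R] M := Finsupp.linearCombination R gsur
    have hπ : Function.Surjective π := by
      rw [← LinearMap.range_eq_top, Finsupp.range_linearCombination, hg.range_eq,
        Submodule.span_univ]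
    let e := LinearMap.quotKerEquivOfSurjective π hπ
    exact ⟨LinearMap.ker π, ⟨(LinearEquiv.toModuleIso e.symm)⟩⟩
end
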